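/- Let n ≥ 2 and 1 ≤ ℓ ≤ n − 1 be integers and let γ ∈ Γ_ℓ. Then for all integers 0 ≤ i ≤ j ≤ ℓ, the set A_{i,j}(γ) satisfies |A_{i,j}(γ)| ≤ binom(ℓ+1, 2i) · binom(n−i−j, ℓ+1−i−j) · 2^i · (ℓ+1−j)! . -/

import Mathlib

open MeasureTheory ProbabilityTheory Filter Finset

namespace Paper

/-- A path of length `ℓ` in the complete graph on `Fin n`: a sequence of `ℓ+1` distinct
vertices. -/
abbrev Path (n ℓ : ℕ) := {v : Fin (ℓ + 1) → Fin n // Function.Injective v}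

/-- The `i`-th edge of a path. -/
def Path.edge {n ℓ : ℕ} (γ : Path n ℓ) (i : Fin ℓ) : Sym2 (Fin n) :=
  s(γ.1 i.castSucc, γ.1 i.succ)

/-- The total weight `X(γ)` of a path. -/
noncomputable def weight {n ℓ : ℕ} (ω : Sym2 (Fin n) → ℝ) (γ : Path n ℓ) : ℝ :=
  ∑ i : Fin ℓ, ω (γ.edge i)

/-- Partial sum of the first `k` edge weights of a path. -/
noncomputable def partialSum {n ℓ : ℕ} (ω : Sym2 (Fin n) → ℝ) (γ : Path n ℓ) (k : ℕ) : ℝ :=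
  ∑ i : Fin ℓ, if (i : ℕ) < k then ω (γ.edge i) else 0

/-- The deviation `M(γ) = max_{1 ≤ k ≤ ℓ} |∑_{i=1}^k X_{e_i} - (k/ℓ) X(γ)|`. -/
noncomputable def deviation {n ℓ : ℕ} (ω : Sym2 (Fin n) → ℝ) (γ : Path n ℓ) : ℝ :=
  ⨆ k : Fin ℓ, |partialSum ω γ ((k : ℕ) + 1) - (((k : ℕ) + 1 : ℝ) / ℓ) * weight ω γ|

/-- The law of the i.i.d. edge weights: each edge carries an exponential variable with
mean `n` (rate `1/n`). -/
noncomputable def P (n : ℕ) : Measure (Sym2 (Fin n) → ℝ) :=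
  Measure.pi fun _ => expMeasure ((n : ℝ)⁻¹)

/-- `L n λ ω` : the maximal `ℓ` such that some path of length `ℓ` has weight at most `λℓ`
(`0` if there is none). -/
noncomputable def L (n : ℕ) (lam : ℝ) (ω : Sym2 (Fin n) → ℝ) : ℕ :=
  sSup {ℓ : ℕ | ∃ γ : Path n ℓ, weight ω γ ≤ lam * ℓ}
/-- The set of edges of a path. -/
def edgeFinset {n ℓ : ℕ} (γ : Path n ℓ) : Finset (Sym2 (Fin n)) :=
  Finset.image γ.edge Finset.univ

/-- `i` is the starting index of an `S`-component of `γ`, where `S = E(γ) ∩ E(γ')`: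
the `i`-th edge lies in `S` and either `i = 0` or the previous edge does not lie in `S`.
Maximal segments of `γ` all of whose edges lie in `S` correspond bijectively to their
starting indices. -/
def compStart {n ℓ ℓ' : ℕ} (γ : Path n ℓ) (γ' : Path n ℓ') (i : Fin ℓ) : Prop :=
  γ.edge i ∈ edgeFinset γ ∩ edgeFinset γ' ∧
    ((i : ℕ) = 0 ∨
      γ.edge ⟨(i : ℕ) - 1, Nat.lt_of_le_of_lt (Nat.sub_le _ _) i.2⟩ ∉
        edgeFinset γ ∩ edgeFinset γ')

/-- `θ(γ, γ')`: the number of `S`-components of `γ` for `S = E(γ) ∩ E(γ')`, counted via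
their starting indices. -/
noncomputable def theta {n ℓ ℓ' : ℕ} (γ : Path n ℓ) (γ' : Path n ℓ') : ℕ := by
  classical exact (Finset.univ.filter fun i : Fin ℓ => compStart γ γ' i).card

/-- `V(S)`: the set of vertices that are endpoints of edges in `S`. -/
noncomputable def vertexFinset {n : ℕ} (S : Finset (Sym2 (Fin n))) : Finset (Fin n) := by
  classical exact Finset.univ.filter fun v => ∃ e ∈ S, v ∈ e

/-- `A_{i,j}(γ)`: the set of paths `γ'` of the same length with `θ(γ,γ') = i` and
`|E(γ) ∩ E(γ')| = j`. -/
noncomputable def Aset {n ℓ : ℕ} (γ : Path n ℓ) (i j : ℕ) : Finset (Path n ℓ) := by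
  classical
  exact Finset.univ.filter fun γ' =>
    theta γ γ' = i ∧ (edgeFinset γ ∩ edgeFinset γ').card = j
variable {n ℓ : ℕ}

/-- vertex of a path, by natural index (junk = last vertex for out of range) -/
def vtx (δ : Path n ℓ) (p : ℕ) : Fin n := δ.1 ⟨min p ℓ, Nat.lt_succ_of_le (min_le_right _ _)⟩

lemma vtx_inj {δ : Path n ℓ} {p q : ℕ} (hp : p ≤ ℓ) (hq : q ≤ ℓ)
    (h : vtx δ p = vtx δ q) : p = q := by
  have := δ.2 h
  simpa [Fin.ext_iff, Nat.min_eq_left hp, Nat.min_eq_left hq] using this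

/-- edge of a path, by natural index -/
def edN (δ : Path n ℓ) (k : ℕ) : Sym2 (Fin n) := s(vtx δ k, vtx δ (k + 1))

lemma edN_eq_edge (δ : Path n ℓ) (k : Fin ℓ) : edN δ (k : ℕ) = δ.edge k := by
  have h1 : min (k : ℕ) ℓ = (k : ℕ) := Nat.min_eq_left (le_of_lt k.2)
  have h2 : min ((k : ℕ) + 1) ℓ = (k : ℕ) + 1 := Nat.min_eq_left k.2
  unfold edN vtx Path.edge
  have e1 : (⟨min (k : ℕ) ℓ, Nat.lt_succ_of_le (min_le_right _ _)⟩ : Fin (ℓ+1)) = k.castSucc := by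
    ext; simpa using h1
  have e2 : (⟨min ((k : ℕ) + 1) ℓ, Nat.lt_succ_of_le (min_le_right _ _)⟩ : Fin (ℓ+1)) = k.succ := by
    ext; simpa using h2
  rw [e1, e2]

lemma mem_edgeFinset {δ : Path n ℓ} {e : Sym2 (Fin n)} :
    e ∈ edgeFinset δ ↔ ∃ k, k < ℓ ∧ edN δ k = e := by
  constructor
  · intro h
    rcases Finset.mem_image.mp h with ⟨k, -, hk⟩
    exact ⟨(k : ℕ), k.2, by rw [edN_eq_edge]; exact hk⟩
  · rintro ⟨k, hk, rfl⟩
    exact Finset.mem_image.mpr ⟨⟨k, hk⟩, Finset.mem_univ _, (edN_eq_edge δ ⟨k, hk⟩).symm⟩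

lemma edN_inj {δ : Path n ℓ} {a b : ℕ} (ha : a < ℓ) (hb : b < ℓ)
    (h : edN δ a = edN δ b) : a = b := by
  rcases Sym2.eq_iff.mp h with ⟨h1, h2⟩ | ⟨h1, h2⟩
  · exact vtx_inj (le_of_lt ha) (le_of_lt hb) h1
  · have e1 := vtx_inj (le_of_lt ha) hb h1
    have e2 := vtx_inj ha (le_of_lt hb) h2
    omega

lemma mem_edN {δ : Path n ℓ} {x : Fin n} {k : ℕ} :
    x ∈ edN δ k ↔ x = vtx δ k ∨ x = vtx δ (k + 1) := Sym2.mem_iff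

lemma share_vtx {δ : Path n ℓ} {a b : ℕ} {x : Fin n} (ha : a < ℓ) (hb : b < ℓ)
    (hab : a + 1 < b) (hxa : x ∈ edN δ a) (hxb : x ∈ edN δ b) : False := by
  rcases mem_edN.mp hxa with h1 | h1 <;> rcases mem_edN.mp hxb with h2 | h2 <;>
  · have := vtx_inj (by omega) (by omega) (h1.symm.trans h2)
    omega

/-- two distinct edges sharing a vertex are consecutive -/
lemma adj_of_share {δ : Path n ℓ} {a b : ℕ} {x : Fin n} (ha : a < ℓ) (hb : b < ℓ)
    (hne : a ≠ b) (hxa : x ∈ edN δ a) (hxb : x ∈ edN δ b) : b = a + 1 ∨ a = b + 1 := by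
  by_contra hc
  push_neg at hc
  rcases Nat.lt_or_ge a b with h | h
  · exact share_vtx ha hb (by omega) hxa hxb
  · exact share_vtx hb ha (by omega) hxb hxa

/-- index of an edge in a path -/
noncomputable def idx (δ : Path n ℓ) (e : Sym2 (Fin n)) : ℕ :=
  if h : ∃ k, k < ℓ ∧ edN δ k = e then h.choose else 0

lemma idx_spec {δ : Path n ℓ} {e : Sym2 (Fin n)} (he : e ∈ edgeFinset δ) :
    idx δ e < ℓ ∧ edN δ (idx δ e) = e := by
  have h := mem_edgeFinset.mp he
  rw [idx, dif_pos h]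
  exact h.choose_spec

lemma idx_edN {δ : Path n ℓ} {k : ℕ} (hk : k < ℓ) : idx δ (edN δ k) = k := by
  have he : edN δ k ∈ edgeFinset δ := mem_edgeFinset.mpr ⟨k, hk, rfl⟩
  have h := idx_spec he
  exact edN_inj h.1 hk h.2

section Sets
variable (δ : Path n ℓ) (S : Finset (Sym2 (Fin n)))

def iSet : Finset ℕ := (range ℓ).filter (fun k => edN δ k ∈ S)
def stSet : Finset ℕ := (iSet δ S).filter (fun k => k = 0 ∨ k - 1 ∉ iSet δ S)
def enSet : Finset ℕ := (iSet δ S).filter (fun k => k + 1 ∉ iSet δ S)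
def fpSet : Finset ℕ := (iSet δ S).filter (fun k => k + 1 ∈ iSet δ S)

variable {δ S}

lemma mem_iSet {k : ℕ} : k ∈ iSet δ S ↔ k < ℓ ∧ edN δ k ∈ S := by
  simp [iSet]

lemma iSet_lt {k : ℕ} (h : k ∈ iSet δ S) : k < ℓ := (mem_iSet.mp h).1

lemma card_st_add_fp : (stSet δ S).card + (fpSet δ S).card = (iSet δ S).card := by
  classical
  rw [stSet, ← Finset.card_filter_add_card_filter_not
    (s := iSet δ S) (p := fun k => k = 0 ∨ k - 1 ∉ iSet δ S)]
  congr 1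
  apply Finset.card_bij (fun k _ => k + 1)
  · intro a ha
    simp only [fpSet, mem_filter] at ha
    simp only [mem_filter, not_or, not_not]
    exact ⟨ha.2, by omega, by simpa using ha.1⟩
  · intro a _ b _ h
    omega
  · intro b hb
    simp only [mem_filter, not_or, not_not] at hb
    refine ⟨b - 1, ?_, by omega⟩
    simp only [fpSet, mem_filter]
    have : b - 1 + 1 = b := by omega
    exact ⟨hb.2.2, by rw [this]; exact hb.1⟩

lemma card_en_add_fp : (enSet δ S).card + (fpSet δ S).card = (iSet δ S).card := by
  classical
  rw [enSet, ← Finset.card_filter_add_card_filter_not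
    (s := iSet δ S) (p := fun k => k + 1 ∉ iSet δ S)]
  congr 2
  simp [fpSet]

noncomputable def endOf (δ : Path n ℓ) (S : Finset (Sym2 (Fin n))) (s : ℕ) : ℕ :=
  if h : ((enSet δ S).filter (s ≤ ·)).Nonempty then ((enSet δ S).filter (s ≤ ·)).min' h else 0

lemma st_subset : stSet δ S ⊆ iSet δ S := Finset.filter_subset _ _
lemma en_subset : enSet δ S ⊆ iSet δ S := Finset.filter_subset _ _

lemma endOf_spec {s : ℕ} (hs : s ∈ iSet δ S) :
    endOf δ S s ∈ enSet δ S ∧ s ≤ endOf δ S s ∧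
      ∀ e ∈ enSet δ S, s ≤ e → endOf δ S s ≤ e := by
  classical
  have hI : (iSet δ S).Nonempty := ⟨s, hs⟩
  set M := (iSet δ S).max' hI with hM
  have hMen : M ∈ enSet δ S := by
    rw [enSet, mem_filter]
    refine ⟨(iSet δ S).max'_mem hI, fun hc => ?_⟩
    have := Finset.le_max' _ _ hc
    omega
  have hsM : s ≤ M := Finset.le_max' _ _ hs
  have hne : ((enSet δ S).filter (s ≤ ·)).Nonempty := ⟨M, by simp [hMen, hsM]⟩
  rw [endOf, dif_pos hne]
  have hmem := Finset.min'_mem _ hne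
  simp only [mem_filter] at hmem
  exact ⟨hmem.1, hmem.2, fun e he hse => Finset.min'_le _ _ (by simp [he, hse])⟩

lemma run_full {s k : ℕ} (hs : s ∈ iSet δ S) (h1 : s ≤ k) (h2 : k ≤ endOf δ S s) :
    k ∈ iSet δ S := by
  obtain ⟨d, rfl⟩ : ∃ d, k = s + d := ⟨k - s, by omega⟩
  clear h1
  induction d with
  | zero => exact hs
  | succ d ih =>
    have hd : s + d ∈ iSet δ S := ih (by omega)
    by_contra hc
    have hen : s + d ∈ enSet δ S := by
      rw [enSet, mem_filter]; exact ⟨hd, hc⟩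
    have := (endOf_spec hs).2.2 _ hen (by omega)
    omega

lemma cover {k : ℕ} (hk : k ∈ iSet δ S) :
    ∃ s ∈ stSet δ S, s ≤ k ∧ k ≤ endOf δ S s := by
  induction k using Nat.strong_induction_on with
  | _ k ih =>
    by_cases hst : k ∈ stSet δ S
    · exact ⟨k, hst, le_refl _, (endOf_spec hk).2.1⟩
    · have hk1 : k ≠ 0 ∧ k - 1 ∈ iSet δ S := by
        rw [stSet, mem_filter] at hst
        push_neg at hst
        have := hst hk
        exact ⟨this.1, this.2⟩
      obtain ⟨s, hs, hsk, hke⟩ := ih (k - 1) (by omega) hk1.2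
      refine ⟨s, hs, by omega, ?_⟩
      rcases Nat.lt_or_ge (k - 1) (endOf δ S s) with h | h
      · omega
      · exfalso
        have : k - 1 = endOf δ S s := by omega
        have hen : k - 1 ∈ enSet δ S := this ▸ (endOf_spec (st_subset hs)).1
        rw [enSet, mem_filter] at hen
        have : k - 1 + 1 = k := by omega
        rw [this] at hen
        exact hen.2 hk

lemma separation {s₁ s₂ : ℕ} (h1 : s₁ ∈ stSet δ S) (h2 : s₂ ∈ stSet δ S)
    (h : s₁ < s₂) : endOf δ S s₁ + 2 ≤ s₂ := by
  have hs2 : s₂ ≠ 0 ∧ s₂ - 1 ∉ iSet δ S ∨ True := Or.inr trivial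
  rw [stSet, mem_filter] at h2
  have hnotin : s₂ - 1 ∉ iSet δ S := by
    rcases h2.2 with h0 | h0
    · omega
    · exact h0
  by_contra hc
  push_neg at hc
  have hin : s₂ - 1 ∈ iSet δ S := run_full (st_subset h1) (by omega) (by omega)
  exact hnotin hin

lemma run_unique {s₁ s₂ k : ℕ} (h1 : s₁ ∈ stSet δ S) (h2 : s₂ ∈ stSet δ S)
    (hk1 : s₁ ≤ k) (hk1' : k ≤ endOf δ S s₁) (hk2 : s₂ ≤ k) (hk2' : k ≤ endOf δ S s₂) :
    s₁ = s₂ := by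
  rcases Nat.lt_trichotomy s₁ s₂ with h | h | h
  · have := separation h1 h2 h; omega
  · exact h
  · have := separation h2 h1 h; omega

lemma iSet_eq_biUnion :
    iSet δ S = (stSet δ S).biUnion (fun s => Finset.Icc s (endOf δ S s)) := by
  classical
  ext k
  simp only [Finset.mem_biUnion, Finset.mem_Icc]
  constructor
  · intro hk
    obtain ⟨s, hs, h1, h2⟩ := cover hk
    exact ⟨s, hs, h1, h2⟩
  · rintro ⟨s, hs, h1, h2⟩
    exact run_full (st_subset hs) h1 h2

lemma sum_len :
    ∑ s ∈ stSet δ S, (endOf δ S s + 1 - s) = (iSet δ S).card := by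
  classical
  rw [iSet_eq_biUnion (δ := δ) (S := S), Finset.card_biUnion]
  · apply Finset.sum_congr rfl
    intro s hs
    rw [Nat.card_Icc]
  · intro s₁ h1 s₂ h2 hne
    simp only [Finset.disjoint_left, Finset.mem_Icc]
    rintro k ⟨a1, a2⟩ ⟨b1, b2⟩
    exact hne (run_unique h1 h2 a1 a2 b1 b2)

end Sets
section Transfer
variable {n ℓ : ℕ} {γ γ' : Path n ℓ} {S : Finset (Sym2 (Fin n))}

/-- For `k ∈ fpSet γ S`, the two edges `edN γ k, edN γ (k+1)` appear in `γ'` at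
consecutive indices; `fpMap` is the smaller one. -/
noncomputable def fpMap (γ γ' : Path n ℓ) (S : Finset (Sym2 (Fin n))) (k : ℕ) : ℕ :=
  min (idx γ' (edN γ k)) (idx γ' (edN γ (k + 1)))

lemma fpMap_spec (hS' : S ⊆ edgeFinset γ') {k : ℕ} (hk : k ∈ fpSet γ S) :
    fpMap γ γ' S k ∈ fpSet γ' S ∧
      ((edN γ' (fpMap γ γ' S k) = edN γ k ∧ edN γ' (fpMap γ γ' S k + 1) = edN γ (k + 1)) ∨
       (edN γ' (fpMap γ γ' S k) = edN γ (k + 1) ∧ edN γ' (fpMap γ γ' S k + 1) = edN γ k)) := by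
  simp only [fpSet, mem_filter] at hk
  obtain ⟨hk1, hk2⟩ := hk
  have hkl : k < ℓ := iSet_lt hk1
  have hkl2 : k + 1 < ℓ := iSet_lt hk2
  have he1 : edN γ k ∈ S := (mem_iSet.mp hk1).2
  have he2 : edN γ (k + 1) ∈ S := (mem_iSet.mp hk2).2
  obtain ⟨ha1, ha2⟩ := idx_spec (δ := γ') (hS' he1)
  obtain ⟨hb1, hb2⟩ := idx_spec (δ := γ') (hS' he2)
  set a := idx γ' (edN γ k)
  set b := idx γ' (edN γ (k + 1))
  have hne : edN γ k ≠ edN γ (k + 1) := fun h => by have := edN_inj hkl hkl2 h; omega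
  have hab : a ≠ b := fun h => hne (by rw [← ha2, ← hb2, h])
  -- shared vertex
  have hsh : vtx γ (k + 1) ∈ edN γ' a ∧ vtx γ (k + 1) ∈ edN γ' b := by
    constructor
    · rw [ha2]; exact mem_edN.mpr (Or.inr rfl)
    · rw [hb2]; exact mem_edN.mpr (Or.inl rfl)
  have hadj := adj_of_share ha1 hb1 hab hsh.1 hsh.2
  rcases hadj with h | h
  · -- b = a + 1
    have hmin : fpMap γ γ' S k = a := by rw [fpMap]; omega
    rw [hmin]
    have hb2' : edN γ' (a + 1) = edN γ (k + 1) := by rw [← h]; exact hb2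
    refine ⟨?_, Or.inl ⟨ha2, hb2'⟩⟩
    simp only [fpSet, mem_filter]
    exact ⟨mem_iSet.mpr ⟨ha1, by rw [ha2]; exact he1⟩,
           mem_iSet.mpr ⟨by omega, by rw [hb2']; exact he2⟩⟩
  · -- a = b + 1
    have hmin : fpMap γ γ' S k = b := by rw [fpMap]; omega
    rw [hmin]
    have ha2' : edN γ' (b + 1) = edN γ k := by rw [← h]; exact ha2
    refine ⟨?_, Or.inr ⟨hb2, ha2'⟩⟩
    simp only [fpSet, mem_filter]
    exact ⟨mem_iSet.mpr ⟨hb1, by rw [hb2]; exact he2⟩,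
           mem_iSet.mpr ⟨by omega, by rw [ha2']; exact he1⟩⟩

lemma card_fp_eq (hS : S ⊆ edgeFinset γ) (hS' : S ⊆ edgeFinset γ') :
    (fpSet γ S).card = (fpSet γ' S).card := by
  classical
  apply Finset.card_bij (fun k _ => fpMap γ γ' S k)
  · intro a ha; exact (fpMap_spec hS' ha).1
  · intro a ha b hb h
    obtain ⟨-, hda⟩ := fpMap_spec (γ := γ) (γ' := γ') hS' ha
    obtain ⟨-, hdb⟩ := fpMap_spec (γ := γ) (γ' := γ') hS' hb
    rw [h] at hda
    simp only [fpSet, mem_filter] at ha hb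
    have hal : a < ℓ := iSet_lt ha.1
    have hal2 : a + 1 < ℓ := iSet_lt ha.2
    have hbl : b < ℓ := iSet_lt hb.1
    have hbl2 : b + 1 < ℓ := iSet_lt hb.2
    rcases hda with ⟨x1, x2⟩ | ⟨x1, x2⟩ <;> rcases hdb with ⟨y1, y2⟩ | ⟨y1, y2⟩
    · exact edN_inj hal hbl (x1.symm.trans y1)
    · have e1 := edN_inj hal hbl2 (x1.symm.trans y1)
      have e2 := edN_inj hal2 hbl (x2.symm.trans y2)
      omega
    · have e1 := edN_inj hal2 hbl (x1.symm.trans y1)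
      have e2 := edN_inj hal hbl2 (x2.symm.trans y2)
      omega
    · have e1 := edN_inj hal2 hbl2 (x1.symm.trans y1)
      omega
  · intro z hz
    -- surjectivity: use fpMap in the other direction
    have hz' := fpMap_spec (γ := γ') (γ' := γ) (S := S) hS hz
    refine ⟨fpMap γ' γ S z, hz'.1, ?_⟩
    obtain ⟨hmem, hd⟩ := hz'
    simp only [fpSet, mem_filter] at hz hmem
    have hzl : z < ℓ := iSet_lt hz.1
    have hzl2 : z + 1 < ℓ := iSet_lt hz.2
    have hwl : fpMap γ' γ S z < ℓ := iSet_lt hmem.1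
    have hwl2 : fpMap γ' γ S z + 1 < ℓ := iSet_lt hmem.2
    rcases hd with ⟨x1, x2⟩ | ⟨x1, x2⟩
    · rw [fpMap, x1, x2, idx_edN hzl, idx_edN hzl2]
      omega
    · rw [fpMap, x1, x2, idx_edN hzl, idx_edN hzl2]
      omega

end Transfer


section Counting
variable {n ℓ : ℕ}

lemma card_iSet {δ : Path n ℓ} {S : Finset (Sym2 (Fin n))} (hS : S ⊆ edgeFinset δ) :
    (iSet δ S).card = S.card := by
  classical
  have himg : (iSet δ S).image (edN δ) = S := by
    ext e
    simp only [Finset.mem_image]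
    constructor
    · rintro ⟨k, hk, rfl⟩; exact (mem_iSet.mp hk).2
    · intro he
      obtain ⟨k, hk, hke⟩ := mem_edgeFinset.mp (hS he)
      exact ⟨k, mem_iSet.mpr ⟨hk, hke.symm ▸ he⟩, hke⟩
  conv_rhs => rw [← himg]
  refine (Finset.card_image_of_injOn ?_).symm
  intro a ha b hb h
  exact edN_inj (iSet_lt ha) (iSet_lt hb) h

lemma theta_eq (γ γ' : Path n ℓ) :
    theta γ γ' = (stSet γ (edgeFinset γ ∩ edgeFinset γ')).card := by
  classical
  rw [theta]
  refine Finset.card_bij (fun (k : Fin ℓ) (_ : k ∈ Finset.univ.filter fun i : Fin ℓ => compStart γ γ' i) => (k : ℕ)) ?_ ?_ ?_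
  · intro a ha
    simp only [Finset.mem_filter, Finset.mem_univ, true_and] at ha
    obtain ⟨h1, h2⟩ := ha
    simp only [stSet, Finset.mem_filter]
    constructor
    · exact mem_iSet.mpr ⟨a.2, by rw [edN_eq_edge]; exact h1⟩
    · rcases h2 with h2 | h2
      · exact Or.inl h2
      · right
        intro hc
        rw [mem_iSet] at hc
        apply h2
        have : edN γ ((a : ℕ) - 1) = γ.edge ⟨(a : ℕ) - 1, Nat.lt_of_le_of_lt (Nat.sub_le _ _) a.2⟩ :=
          edN_eq_edge γ ⟨(a : ℕ) - 1, Nat.lt_of_le_of_lt (Nat.sub_le _ _) a.2⟩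
        rw [← this]
        exact hc.2
  · intro a _ b _ h; exact Fin.ext h
  · intro b hb
    simp only [stSet, Finset.mem_filter] at hb
    have hbl : b < ℓ := iSet_lt hb.1
    refine ⟨⟨b, hbl⟩, ?_, rfl⟩
    simp only [Finset.mem_filter, Finset.mem_univ, true_and]
    constructor
    · rw [← edN_eq_edge]
      exact (mem_iSet.mp hb.1).2
    · rcases hb.2 with h | h
      · exact Or.inl h
      · right
        intro hc
        apply h
        rw [mem_iSet]
        have : edN γ (b - 1) = γ.edge ⟨b - 1, Nat.lt_of_le_of_lt (Nat.sub_le _ _) hbl⟩ :=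
          edN_eq_edge γ ⟨b - 1, Nat.lt_of_le_of_lt (Nat.sub_le _ _) hbl⟩
        exact ⟨by omega, by rw [this]; exact hc⟩

/-- main counting consequences for `γ' ∈ Aset γ i j` -/
lemma st_en_cards {γ γ' : Path n ℓ} {i j : ℕ}
    (hθ : theta γ γ' = i) (hj : (edgeFinset γ ∩ edgeFinset γ').card = j) :
    (stSet γ' (edgeFinset γ ∩ edgeFinset γ')).card = i ∧
    (enSet γ' (edgeFinset γ ∩ edgeFinset γ')).card = i ∧
    (iSet γ' (edgeFinset γ ∩ edgeFinset γ')).card = j := by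
  classical
  set S := edgeFinset γ ∩ edgeFinset γ' with hSdef
  have hSγ : S ⊆ edgeFinset γ := Finset.inter_subset_left
  have hSγ' : S ⊆ edgeFinset γ' := Finset.inter_subset_right
  have hIγ : (iSet γ S).card = j := by rw [card_iSet hSγ]; exact hj
  have hIγ' : (iSet γ' S).card = j := by rw [card_iSet hSγ']; exact hj
  have hstγ : (stSet γ S).card = i := by rw [← theta_eq]; exact hθ
  have hfp := card_fp_eq (γ := γ) (γ' := γ') (S := S) hSγ hSγ'
  have h1 := card_st_add_fp (δ := γ) (S := S)
  have h2 := card_st_add_fp (δ := γ') (S := S)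
  have h3 := card_en_add_fp (δ := γ') (S := S)
  refine ⟨by omega, by omega, hIγ'⟩

end Counting

section Geom
variable {n ℓ : ℕ}

/-- γ-index of the k-th edge of γ' -/
noncomputable def psi (γ γ' : Path n ℓ) (k : ℕ) : ℕ := idx γ (edN γ' k)

variable {γ γ' : Path n ℓ} {S : Finset (Sym2 (Fin n))}

lemma psi_spec (hSγ : S ⊆ edgeFinset γ) {k : ℕ} (hk : k ∈ iSet γ' S) :
    psi γ γ' k < ℓ ∧ edN γ (psi γ γ' k) = edN γ' k :=
  idx_spec (hSγ (mem_iSet.mp hk).2)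

lemma psi_inj (hSγ : S ⊆ edgeFinset γ) {k₁ k₂ : ℕ} (h1 : k₁ ∈ iSet γ' S)
    (h2 : k₂ ∈ iSet γ' S) (h : psi γ γ' k₁ = psi γ γ' k₂) : k₁ = k₂ := by
  have e1 := (psi_spec hSγ h1).2
  have e2 := (psi_spec hSγ h2).2
  rw [h, e2] at e1
  exact (edN_inj (iSet_lt h2) (iSet_lt h1) e1).symm

lemma psi_step (hSγ : S ⊆ edgeFinset γ) {k : ℕ} (hk : k ∈ iSet γ' S)
    (hk1 : k + 1 ∈ iSet γ' S) :
    psi γ γ' (k + 1) = psi γ γ' k + 1 ∨ psi γ γ' k = psi γ γ' (k + 1) + 1 := by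
  obtain ⟨ha1, ha2⟩ := psi_spec hSγ hk
  obtain ⟨hb1, hb2⟩ := psi_spec hSγ hk1
  have hkl : k < ℓ := iSet_lt hk
  have hkl1 : k + 1 < ℓ := iSet_lt hk1
  have hne : psi γ γ' k ≠ psi γ γ' (k + 1) := by
    intro h
    exact absurd (psi_inj hSγ hk hk1 h) (by omega)
  have hsh1 : vtx γ' (k + 1) ∈ edN γ (psi γ γ' k) := by
    rw [ha2]; exact mem_edN.mpr (Or.inr rfl)
  have hsh2 : vtx γ' (k + 1) ∈ edN γ (psi γ γ' (k + 1)) := by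
    rw [hb2]; exact mem_edN.mpr (Or.inl rfl)
  exact adj_of_share ha1 hb1 hne hsh1 hsh2

lemma run_linear (hSγ : S ⊆ edgeFinset γ) {s : ℕ} (hs : s ∈ stSet γ' S) :
    (∀ r, r ≤ endOf γ' S s - s → psi γ γ' (s + r) = psi γ γ' s + r) ∨
    (∀ r, r ≤ endOf γ' S s - s → psi γ γ' (s + r) + r = psi γ γ' s) := by
  set e := endOf γ' S s with he
  have hsi : s ∈ iSet γ' S := st_subset hs
  have hse : s ≤ e := (endOf_spec hsi).2.1
  have hmem : ∀ k, s ≤ k → k ≤ e → k ∈ iSet γ' S := fun k h1 h2 => run_full hsi h1 h2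
  by_cases hd : e - s = 0
  · left
    intro r hr
    have : r = 0 := by omega
    subst this
    simp
  have hstep1 := psi_step hSγ (hmem s le_rfl hse) (hmem (s + 1) (by omega) (by omega))
  rcases hstep1 with hinc | hdec
  · left
    intro r hr
    induction r using Nat.strong_induction_on with
    | _ r ih =>
      match r, hr with
      | 0, _ => simp
      | 1, _ => simpa using hinc
      | (r + 2), hr =>
        have ih1 := ih (r + 1) (by omega) (by omega)
        have ih0 := ih r (by omega) (by omega)
        have hstep := psi_step hSγ (hmem (s + (r + 1)) (by omega) (by omega))
          (by rw [show s + (r+1) + 1 = s + (r+2) by ring]; exact hmem _ (by omega) (by omega))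
        rw [show s + (r + 1) + 1 = s + (r + 2) by ring] at hstep
        rcases hstep with h | h
        · omega
        · exfalso
          have : psi γ γ' (s + (r + 2)) = psi γ γ' (s + r) := by omega
          have := psi_inj hSγ (hmem _ (by omega) (by omega)) (hmem _ (by omega) (by omega)) this
          omega
  · right
    intro r hr
    induction r using Nat.strong_induction_on with
    | _ r ih =>
      match r, hr with
      | 0, _ => simp
      | 1, _ =>
        have h1 : s + 1 = s + 1 := rfl
        omega
      | (r + 2), hr =>
        have ih1 := ih (r + 1) (by omega) (by omega)
        have ih0 := ih r (by omega) (by omega)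
        have hstep := psi_step hSγ (hmem (s + (r + 1)) (by omega) (by omega))
          (by rw [show s + (r+1) + 1 = s + (r+2) by ring]; exact hmem _ (by omega) (by omega))
        rw [show s + (r + 1) + 1 = s + (r + 2) by ring] at hstep
        rcases hstep with h | h
        · exfalso
          have : psi γ γ' (s + (r + 2)) = psi γ γ' (s + r) := by omega
          have := psi_inj hSγ (hmem _ (by omega) (by omega)) (hmem _ (by omega) (by omega)) this
          omega
        · omega

end Geom

section Geom2
variable {n ℓ : ℕ}

noncomputable def bOf (γ γ' : Path n ℓ) (S : Finset (Sym2 (Fin n))) (s : ℕ) : ℕ :=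
  min (psi γ γ' s) (psi γ γ' (endOf γ' S s))

noncomputable def mOf (γ' : Path n ℓ) (S : Finset (Sym2 (Fin n))) (s : ℕ) : ℕ :=
  endOf γ' S s + 1 - s

variable {γ γ' : Path n ℓ} {S : Finset (Sym2 (Fin n))}

lemma run_cases (hSγ : S ⊆ edgeFinset γ) {s : ℕ} (hs : s ∈ stSet γ' S) :
    (∀ r, r ≤ endOf γ' S s - s → psi γ γ' (s + r) = bOf γ γ' S s + r) ∨
    (∀ r, r ≤ endOf γ' S s - s →
      psi γ γ' (s + r) = bOf γ γ' S s + (endOf γ' S s - s - r)) := by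
  have hse : s ≤ endOf γ' S s := (endOf_spec (st_subset hs)).2.1
  have hes : s + (endOf γ' S s - s) = endOf γ' S s := by omega
  rcases run_linear hSγ hs with h | h
  · left
    have hde := h (endOf γ' S s - s) le_rfl
    rw [hes] at hde
    have hb : bOf γ γ' S s = psi γ γ' s := by rw [bOf]; omega
    intro r hr
    rw [hb]
    exact h r hr
  · right
    have hde := h (endOf γ' S s - s) le_rfl
    rw [hes] at hde
    have hb : bOf γ γ' S s + (endOf γ' S s - s) = psi γ γ' s := by rw [bOf]; omega
    intro r hr
    have := h r hr
    omega

lemma bd_lt (hSγ : S ⊆ edgeFinset γ) {s : ℕ} (hs : s ∈ stSet γ' S) :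
    bOf γ γ' S s + (endOf γ' S s - s) < ℓ := by
  have hse : s ≤ endOf γ' S s := (endOf_spec (st_subset hs)).2.1
  have hei : endOf γ' S s ∈ iSet γ' S := en_subset (endOf_spec (st_subset hs)).1
  have hsi : s ∈ iSet γ' S := st_subset hs
  rcases run_cases hSγ hs with h | h
  · have := h (endOf γ' S s - s) le_rfl
    rw [show s + (endOf γ' S s - s) = endOf γ' S s by omega] at this
    have := (psi_spec hSγ hei).1
    omega
  · have h0 := h 0 (by omega)
    rw [Nat.add_zero] at h0
    have h2 := (psi_spec hSγ hsi).1
    omega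

lemma psi_image (hSγ : S ⊆ edgeFinset γ) {s : ℕ} (hs : s ∈ stSet γ' S) :
    (Finset.Icc s (endOf γ' S s)).image (psi γ γ') =
      Finset.Icc (bOf γ γ' S s) (bOf γ γ' S s + (endOf γ' S s - s)) := by
  have hse : s ≤ endOf γ' S s := (endOf_spec (st_subset hs)).2.1
  ext x
  simp only [Finset.mem_image, Finset.mem_Icc]
  constructor
  · rintro ⟨k, ⟨h1, h2⟩, rfl⟩
    obtain ⟨r, rfl⟩ : ∃ r, k = s + r := ⟨k - s, by omega⟩
    rcases run_cases hSγ hs with h | h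
    · rw [h r (by omega)]; omega
    · rw [h r (by omega)]; omega
  · rintro ⟨h1, h2⟩
    rcases run_cases hSγ hs with h | h
    · refine ⟨s + (x - bOf γ γ' S s), by omega, ?_⟩
      rw [h (x - bOf γ γ' S s) (by omega)]; omega
    · refine ⟨s + (bOf γ γ' S s + (endOf γ' S s - s) - x), by omega, ?_⟩
      rw [h _ (by omega)]; omega

lemma runs_disjoint_in_gamma (hSγ : S ⊆ edgeFinset γ) {s₁ s₂ x : ℕ}
    (h1 : s₁ ∈ stSet γ' S) (h2 : s₂ ∈ stSet γ' S) (hne : s₁ ≠ s₂)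
    (hx1 : bOf γ γ' S s₁ ≤ x ∧ x ≤ bOf γ γ' S s₁ + (endOf γ' S s₁ - s₁))
    (hx2 : bOf γ γ' S s₂ ≤ x ∧ x ≤ bOf γ γ' S s₂ + (endOf γ' S s₂ - s₂)) : False := by
  have hi1 : x ∈ (Finset.Icc s₁ (endOf γ' S s₁)).image (psi γ γ') := by
    rw [psi_image hSγ h1]; simp only [Finset.mem_Icc]; exact hx1
  have hi2 : x ∈ (Finset.Icc s₂ (endOf γ' S s₂)).image (psi γ γ') := by
    rw [psi_image hSγ h2]; simp only [Finset.mem_Icc]; exact hx2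
  obtain ⟨k₁, hk₁, hk₁x⟩ := Finset.mem_image.mp hi1
  obtain ⟨k₂, hk₂, hk₂x⟩ := Finset.mem_image.mp hi2
  simp only [Finset.mem_Icc] at hk₁ hk₂
  have hk1i : k₁ ∈ iSet γ' S := run_full (st_subset h1) hk₁.1 hk₁.2
  have hk2i : k₂ ∈ iSet γ' S := run_full (st_subset h2) hk₂.1 hk₂.2
  have : k₁ = k₂ := psi_inj hSγ hk1i hk2i (hk₁x.trans hk₂x.symm)
  subst this
  exact hne (run_unique h1 h2 hk₁.1 hk₁.2 hk₂.1 hk₂.2)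

lemma no_touch (hSγ : S ⊆ edgeFinset γ) {s₁ s₂ : ℕ}
    (h1 : s₁ ∈ stSet γ' S) (h2 : s₂ ∈ stSet γ' S) (hne : s₁ ≠ s₂) :
    bOf γ γ' S s₁ + (endOf γ' S s₁ - s₁) + 1 ≠ bOf γ γ' S s₂ := by
  intro hc
  set x := bOf γ γ' S s₁ + (endOf γ' S s₁ - s₁) with hxd
  -- x is the last γ-edge of run 1, x+1 = b₂ is the first γ-edge of run 2
  have hx1 : x ∈ (Finset.Icc s₁ (endOf γ' S s₁)).image (psi γ γ') := by
    rw [psi_image hSγ h1]; simp only [Finset.mem_Icc]; omega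
  have hx2 : x + 1 ∈ (Finset.Icc s₂ (endOf γ' S s₂)).image (psi γ γ') := by
    rw [psi_image hSγ h2]; simp only [Finset.mem_Icc]; omega
  obtain ⟨k₁, hk₁, hk₁x⟩ := Finset.mem_image.mp hx1
  obtain ⟨k₂, hk₂, hk₂x⟩ := Finset.mem_image.mp hx2
  simp only [Finset.mem_Icc] at hk₁ hk₂
  have hk1i : k₁ ∈ iSet γ' S := run_full (st_subset h1) hk₁.1 hk₁.2
  have hk2i : k₂ ∈ iSet γ' S := run_full (st_subset h2) hk₂.1 hk₂.2
  have hxl : x < ℓ := by have := bd_lt hSγ h1; omega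
  have hxl2 : x + 1 < ℓ := by have := bd_lt hSγ h2; omega
  have he1 : edN γ' k₁ = edN γ x := by rw [← (psi_spec hSγ hk1i).2, hk₁x]
  have he2 : edN γ' k₂ = edN γ (x + 1) := by rw [← (psi_spec hSγ hk2i).2, hk₂x]
  have hkk : k₁ ≠ k₂ := by
    intro h
    rw [h, he2] at he1
    have := edN_inj hxl2 hxl he1
    omega
  have hsh1 : vtx γ (x + 1) ∈ edN γ' k₁ := by rw [he1]; exact mem_edN.mpr (Or.inr rfl)
  have hsh2 : vtx γ (x + 1) ∈ edN γ' k₂ := by rw [he2]; exact mem_edN.mpr (Or.inl rfl)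
  have hadj := adj_of_share (iSet_lt hk1i) (iSet_lt hk2i) hkk hsh1 hsh2
  rcases Nat.lt_or_ge s₁ s₂ with h | h
  · have := separation h1 h2 h; omega
  · have hlt : s₂ < s₁ := by omega
    have := separation h2 h1 hlt; omega

lemma gamma_sep (hSγ : S ⊆ edgeFinset γ) {s₁ s₂ : ℕ}
    (h1 : s₁ ∈ stSet γ' S) (h2 : s₂ ∈ stSet γ' S) (hne : s₁ ≠ s₂) :
    bOf γ γ' S s₁ + (endOf γ' S s₁ - s₁) + 2 ≤ bOf γ γ' S s₂ ∨
    bOf γ γ' S s₂ + (endOf γ' S s₂ - s₂) + 2 ≤ bOf γ γ' S s₁ := by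
  rcases Nat.lt_trichotomy (bOf γ γ' S s₁) (bOf γ γ' S s₂) with hb | hb | hb
  · left
    have hx : ¬ (bOf γ γ' S s₂ ≤ bOf γ γ' S s₁ + (endOf γ' S s₁ - s₁)) := fun h =>
      runs_disjoint_in_gamma hSγ h1 h2 hne ⟨by omega, h⟩ ⟨le_rfl, by omega⟩
    have ht := no_touch hSγ h1 h2 hne
    omega
  · exact (runs_disjoint_in_gamma hSγ h1 h2 hne ⟨le_rfl, by omega⟩
      ⟨by omega, by omega⟩).elim
  · right
    have hx : ¬ (bOf γ γ' S s₁ ≤ bOf γ γ' S s₂ + (endOf γ' S s₂ - s₂)) := fun h =>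
      runs_disjoint_in_gamma hSγ h2 h1 hne.symm ⟨by omega, h⟩ ⟨le_rfl, by omega⟩
    have ht := no_touch hSγ h2 h1 hne.symm
    omega
end Geom2

section Geom3
variable {n ℓ : ℕ} {γ γ' : Path n ℓ} {S : Finset (Sym2 (Fin n))}

lemma mOf_eq {s : ℕ} (hs : s ∈ stSet γ' S) :
    mOf γ' S s = (endOf γ' S s - s) + 1 := by
  have := (endOf_spec (st_subset hs)).2.1
  rw [mOf]; omega

lemma interval_sum_le (hSγ : S ⊆ edgeFinset γ) {F : Finset ℕ} (hF : F ⊆ stSet γ' S)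
    {lo hi : ℕ} (hlo : ∀ u ∈ F, lo ≤ bOf γ γ' S u)
    (hhi : ∀ u ∈ F, bOf γ γ' S u + (endOf γ' S u - u) < hi) :
    ∑ u ∈ F, mOf γ' S u ≤ hi - lo := by
  classical
  have hcard : ∑ u ∈ F, mOf γ' S u =
      (F.biUnion (fun u => Finset.Icc (bOf γ γ' S u) (bOf γ γ' S u + (endOf γ' S u - u)))).card := by
    rw [Finset.card_biUnion]
    · apply Finset.sum_congr rfl
      intro u hu
      rw [Nat.card_Icc, mOf_eq (hF hu)]
      omega
    · intro u hu w hw hne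
      simp only [Finset.disjoint_left, Finset.mem_Icc]
      rintro x ⟨a1, a2⟩ ⟨b1, b2⟩
      exact runs_disjoint_in_gamma hSγ (hF hu) (hF hw) hne ⟨a1, a2⟩ ⟨b1, b2⟩
  rw [hcard]
  calc (F.biUnion _).card ≤ (Finset.Ico lo hi).card := by
        apply Finset.card_le_card
        intro x hx
        simp only [Finset.mem_biUnion, Finset.mem_Icc] at hx
        obtain ⟨u, hu, hx1, hx2⟩ := hx
        simp only [Finset.mem_Ico]
        exact ⟨le_trans (hlo u hu) hx1, lt_of_le_of_lt hx2 (hhi u hu)⟩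
    _ = hi - lo := Nat.card_Ico lo hi

lemma b_inj_st (hSγ : S ⊆ edgeFinset γ) {s₁ s₂ : ℕ} (h1 : s₁ ∈ stSet γ' S)
    (h2 : s₂ ∈ stSet γ' S) (h : bOf γ γ' S s₁ = bOf γ γ' S s₂) : s₁ = s₂ := by
  by_contra hne
  exact runs_disjoint_in_gamma hSγ h1 h2 hne ⟨le_rfl, by omega⟩ ⟨by omega, by omega⟩

noncomputable def sumBelow (γ γ' : Path n ℓ) (S : Finset (Sym2 (Fin n))) (s : ℕ) : ℕ :=
  ∑ u ∈ (stSet γ' S).filter (fun u => bOf γ γ' S u < bOf γ γ' S s), mOf γ' S u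

noncomputable def cOf (γ γ' : Path n ℓ) (S : Finset (Sym2 (Fin n))) (s : ℕ) : ℕ :=
  bOf γ γ' S s - sumBelow γ γ' S s

lemma sum_m : ∑ u ∈ stSet γ' S, mOf γ' S u = (iSet γ' S).card := by
  rw [← sum_len (δ := γ') (S := S)]
  apply Finset.sum_congr rfl
  intro u _
  rfl

lemma sumBelow_le (hSγ : S ⊆ edgeFinset γ) {s : ℕ} (hs : s ∈ stSet γ' S) :
    sumBelow γ γ' S s ≤ bOf γ γ' S s := by
  have := interval_sum_le (γ := γ) (γ' := γ') hSγ
    (F := (stSet γ' S).filter (fun u => bOf γ γ' S u < bOf γ γ' S s))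
    (Finset.filter_subset _ _)
    (lo := 0) (hi := bOf γ γ' S s) (fun u _ => Nat.zero_le _) ?_
  · simpa [sumBelow] using this
  · intro u hu
    simp only [Finset.mem_filter] at hu
    have hne : u ≠ s := fun h => by rw [h] at hu; omega
    rcases gamma_sep hSγ hu.1 hs hne with h | h
    · omega
    · omega

lemma cOf_add (hSγ : S ⊆ edgeFinset γ) {s : ℕ} (hs : s ∈ stSet γ' S) :
    cOf γ γ' S s + sumBelow γ γ' S s = bOf γ γ' S s := by
  have := sumBelow_le hSγ hs
  rw [cOf]; omega

lemma split_above (hSγ : S ⊆ edgeFinset γ) {s : ℕ} (hs : s ∈ stSet γ' S) :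
    ∑ u ∈ stSet γ' S, mOf γ' S u =
      sumBelow γ γ' S s + (mOf γ' S s +
        ∑ u ∈ (stSet γ' S).filter (fun u => bOf γ γ' S s < bOf γ γ' S u), mOf γ' S u) := by
  classical
  have hset : stSet γ' S = (stSet γ' S).filter (fun u => bOf γ γ' S u < bOf γ γ' S s) ∪
      insert s ((stSet γ' S).filter (fun u => bOf γ γ' S s < bOf γ γ' S u)) := by
    ext w
    simp only [Finset.mem_filter, Finset.mem_insert, Finset.mem_union]
    constructor
    · intro hw
      rcases Nat.lt_trichotomy (bOf γ γ' S w) (bOf γ γ' S s) with h | h | h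
      · exact Or.inl ⟨hw, h⟩
      · exact Or.inr (Or.inl (b_inj_st hSγ hw hs h))
      · exact Or.inr (Or.inr ⟨hw, h⟩)
    · rintro (⟨hw, -⟩ | rfl | ⟨hw, -⟩) <;> first | exact hw | exact hs
  conv_lhs => rw [hset]
  rw [Finset.sum_union, Finset.sum_insert, sumBelow]
  · simp only [Finset.mem_filter]
    omega
  · simp only [Finset.disjoint_left, Finset.mem_filter, Finset.mem_insert]
    rintro w ⟨hw, h⟩ (rfl | ⟨-, h'⟩) <;> omega

lemma cOf_le (hSγ : S ⊆ edgeFinset γ) {s : ℕ} (hs : s ∈ stSet γ' S) :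
    cOf γ γ' S s + (iSet γ' S).card ≤ ℓ := by
  have hsplit := split_above hSγ hs
  rw [sum_m] at hsplit
  have hdlt := bd_lt hSγ hs
  have hm := mOf_eq hs
  have habove : ∑ u ∈ (stSet γ' S).filter (fun u => bOf γ γ' S s < bOf γ γ' S u), mOf γ' S u ≤
      ℓ - (bOf γ γ' S s + mOf γ' S s) := by
    apply interval_sum_le hSγ (Finset.filter_subset _ _)
    · intro u hu
      simp only [Finset.mem_filter] at hu
      have hne : u ≠ s := fun h => by rw [h] at hu; omega
      rcases gamma_sep hSγ hu.1 hs hne with h | h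
      · omega
      · omega
    · intro u hu
      simp only [Finset.mem_filter] at hu
      exact bd_lt hSγ hu.1
  have hca := cOf_add hSγ hs
  omega

lemma cOf_strict (hSγ : S ⊆ edgeFinset γ) {u s : ℕ} (hu : u ∈ stSet γ' S)
    (hs : s ∈ stSet γ' S) (hlt : bOf γ γ' S u < bOf γ γ' S s) :
    cOf γ γ' S u < cOf γ γ' S s := by
  classical
  have hne : u ≠ s := fun h => by rw [h] at hlt; omega
  have hsep : bOf γ γ' S u + (endOf γ' S u - u) + 2 ≤ bOf γ γ' S s := by
    rcases gamma_sep hSγ hu hs hne with h | h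
    · exact h
    · omega
  have hmu := mOf_eq hu
  -- split sumBelow s
  have hsplit : sumBelow γ γ' S s = sumBelow γ γ' S u + (mOf γ' S u +
      ∑ w ∈ (stSet γ' S).filter
        (fun w => bOf γ γ' S u < bOf γ γ' S w ∧ bOf γ γ' S w < bOf γ γ' S s), mOf γ' S w) := by
    have hset : (stSet γ' S).filter (fun w => bOf γ γ' S w < bOf γ γ' S s) =
        insert u (((stSet γ' S).filter (fun w => bOf γ γ' S w < bOf γ γ' S u)) ∪
          ((stSet γ' S).filter
            (fun w => bOf γ γ' S u < bOf γ γ' S w ∧ bOf γ γ' S w < bOf γ γ' S s))) := by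
      ext w
      simp only [Finset.mem_filter, Finset.mem_insert, Finset.mem_union]
      constructor
      · rintro ⟨hw, hws⟩
        rcases Nat.lt_trichotomy (bOf γ γ' S w) (bOf γ γ' S u) with h | h | h
        · exact Or.inr (Or.inl ⟨hw, h⟩)
        · exact Or.inl (b_inj_st hSγ hw hu h)
        · exact Or.inr (Or.inr ⟨hw, h, hws⟩)
      · rintro (rfl | ⟨hw, h⟩ | ⟨hw, h1, h2⟩)
        · exact ⟨hu, hlt⟩
        · exact ⟨hw, by omega⟩
        · exact ⟨hw, h2⟩
    rw [sumBelow, sumBelow, hset, Finset.sum_insert, Finset.sum_union]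
    · ring
    · simp only [Finset.disjoint_left, Finset.mem_filter]
      rintro w ⟨-, h⟩ ⟨-, h', -⟩
      omega
    · simp only [Finset.mem_union, Finset.mem_filter]
      rintro (⟨-, h⟩ | ⟨-, h, -⟩) <;> omega
  have hbetween : ∑ w ∈ (stSet γ' S).filter
      (fun w => bOf γ γ' S u < bOf γ γ' S w ∧ bOf γ γ' S w < bOf γ γ' S s), mOf γ' S w ≤
      (bOf γ γ' S s - 1) - (bOf γ γ' S u + mOf γ' S u) := by
    apply interval_sum_le hSγ (Finset.filter_subset _ _)
    · intro w hw
      simp only [Finset.mem_filter] at hw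
      have hne' : u ≠ w := fun h => by rw [h] at hw; omega
      rcases gamma_sep hSγ hu hw.1 hne' with h | h
      · omega
      · omega
    · intro w hw
      simp only [Finset.mem_filter] at hw
      have hne' : w ≠ s := fun h => by rw [h] at hw; omega
      rcases gamma_sep hSγ hw.1 hs hne' with h | h
      · omega
      · omega
  have hca_u := cOf_add hSγ hu
  have hca_s := cOf_add hSγ hs
  omega

end Geom3

section Recon
variable {n ℓ : ℕ} {γ γ' : Path n ℓ} {S : Finset (Sym2 (Fin n))}

lemma recon (hSγ : S ⊆ edgeFinset γ) {s : ℕ} (hs : s ∈ stSet γ' S) :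
    (vtx γ' s = vtx γ (bOf γ γ' S s) →
      ∀ r, r ≤ mOf γ' S s → vtx γ' (s + r) = vtx γ (bOf γ γ' S s + r)) ∧
    (vtx γ' s ≠ vtx γ (bOf γ γ' S s) →
      ∀ r, r ≤ mOf γ' S s →
        vtx γ' (s + r) = vtx γ (bOf γ γ' S s + (mOf γ' S s - r))) := by
  have hsi : s ∈ iSet γ' S := st_subset hs
  have hse : s ≤ endOf γ' S s := (endOf_spec hsi).2.1
  have hel : endOf γ' S s < ℓ := iSet_lt (en_subset (endOf_spec hsi).1)
  have hbd : bOf γ γ' S s + (endOf γ' S s - s) < ℓ := bd_lt hSγ hs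
  have hm : mOf γ' S s = (endOf γ' S s - s) + 1 := mOf_eq hs
  set b := bOf γ γ' S s with hbdef
  set d := endOf γ' S s - s with hddef
  set m := mOf γ' S s with hmdef
  have hedge : ∀ r, r ≤ d → edN γ' (s + r) = edN γ (psi γ γ' (s + r)) := by
    intro r hr
    exact ((psi_spec hSγ (run_full hsi (by omega) (by omega))).2).symm
  -- unfolded edge equality
  have hedge' : ∀ r, r ≤ d →
      s(vtx γ' (s + r), vtx γ' (s + r + 1)) = edN γ (psi γ γ' (s + r)) := by
    intro r hr
    rw [← hedge r hr]
    rfl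
  rcases run_cases hSγ hs with hlin | hlin
  · -- increasing case : ψ(s+r) = b + r
    have hED : ∀ r, r ≤ d →
        s(vtx γ' (s + r), vtx γ' (s + r + 1)) = s(vtx γ (b + r), vtx γ (b + r + 1)) := by
      intro r hr
      rw [hedge' r hr, hlin r hr]
      rfl
    -- claim: the start vertex matches (when d ≥ 1), or handle d = 0 separately
    have claim1 : vtx γ' s = vtx γ b →
        ∀ r, r ≤ m → vtx γ' (s + r) = vtx γ (b + r) := by
      intro h0 r hr
      induction r with
      | zero => simpa using h0
      | succ r ih =>
        have hrd : r ≤ d := by omega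
        have ihr := ih (by omega)
        rcases Sym2.eq_iff.mp (hED r hrd) with ⟨e1, e2⟩ | ⟨e1, e2⟩
        · exact e2
        · exfalso
          rw [ihr] at e1
          have := vtx_inj (by omega) (by omega) e1
          omega
    by_cases hd0 : d = 0
    · -- single-edge run
      rcases Sym2.eq_iff.mp (hED 0 (by omega)) with ⟨e1, e2⟩ | ⟨e1, e2⟩
      · simp only [Nat.add_zero] at e1 e2
        refine ⟨fun _ => claim1 e1, fun hne => absurd e1 hne⟩
      · simp only [Nat.add_zero] at e1 e2
        have hne0 : vtx γ' s ≠ vtx γ b := by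
          rw [e1]
          intro hc
          have := vtx_inj (by omega) (by omega) hc
          omega
        refine ⟨fun h => absurd h hne0, fun _ r hr => ?_⟩
        have hm1 : m = 1 := by omega
        rcases (by omega : r = 0 ∨ r = 1) with rfl | rfl
        · simpa [hm1] using e1
        · simpa [hm1] using e2
    · -- d ≥ 1 : start vertex must match
      have heps : vtx γ' s = vtx γ b := by
        rcases Sym2.eq_iff.mp (hED 0 (by omega)) with ⟨e1, e2⟩ | ⟨e1, e2⟩
        · simpa using e1
        · exfalso
          simp only [Nat.add_zero] at e1 e2
          rcases Sym2.eq_iff.mp (hED 1 (by omega)) with ⟨f1, f2⟩ | ⟨f1, f2⟩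
          · rw [e2] at f1
            have := vtx_inj (by omega) (by omega) f1
            omega
          · rw [e2] at f1
            have := vtx_inj (by omega) (by omega) f1
            omega
      exact ⟨fun _ => claim1 heps, fun hne => absurd heps hne⟩
  · -- decreasing case : ψ(s+r) = b + (d - r)
    have hED : ∀ r, r ≤ d →
        s(vtx γ' (s + r), vtx γ' (s + r + 1)) =
          s(vtx γ (b + (d - r)), vtx γ (b + (d - r) + 1)) := by
      intro r hr
      rw [hedge' r hr, hlin r hr]
      rfl
    by_cases hd0 : d = 0
    · -- single-edge run, same as before (b + (d-0) = b)
      rcases Sym2.eq_iff.mp (hED 0 (by omega)) with ⟨e1, e2⟩ | ⟨e1, e2⟩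
      · simp only [Nat.add_zero, hd0, Nat.sub_zero] at e1 e2
        refine ⟨fun _ r hr => ?_, fun hne => absurd e1 hne⟩
        have hm1 : m = 1 := by omega
        rcases (by omega : r = 0 ∨ r = 1) with rfl | rfl
        · simpa using e1
        · simpa [hm1] using e2
      · simp only [Nat.add_zero, hd0, Nat.sub_zero] at e1 e2
        have hne0 : vtx γ' s ≠ vtx γ b := by
          rw [e1]
          intro hc
          have := vtx_inj (by omega) (by omega) hc
          omega
        refine ⟨fun h => absurd h hne0, fun _ r hr => ?_⟩
        have hm1 : m = 1 := by omega
        rcases (by omega : r = 0 ∨ r = 1) with rfl | rfl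
        · simpa [hm1] using e1
        · simpa [hm1] using e2
    · -- d ≥ 1
      have hr0 : vtx γ' s = vtx γ (b + m) ∧ vtx γ' (s + 1) = vtx γ (b + d) := by
        rcases Sym2.eq_iff.mp (hED 0 (by omega)) with ⟨e1, e2⟩ | ⟨e1, e2⟩
        · exfalso
          simp only [Nat.add_zero, Nat.sub_zero] at e1 e2
          rcases Sym2.eq_iff.mp (hED 1 (by omega)) with ⟨f1, f2⟩ | ⟨f1, f2⟩
          · rw [e2] at f1
            have := vtx_inj (by omega) (by omega) f1
            omega
          · rw [e2] at f1
            have := vtx_inj (by omega) (by omega) f1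
            omega
        · simp only [Nat.add_zero, Nat.sub_zero] at e1 e2
          constructor
          · rw [e1]
            congr 1
            omega
          · simpa using e2
      have claim2 : ∀ r, r ≤ m → vtx γ' (s + r) = vtx γ (b + (m - r)) := by
        intro r hr
        induction r with
        | zero => simpa using hr0.1
        | succ r ih =>
          have hrd : r ≤ d := by omega
          have ihr := ih (by omega)
          rcases Sym2.eq_iff.mp (hED r hrd) with ⟨e1, e2⟩ | ⟨e1, e2⟩
          · exfalso
            rw [ihr] at e1
            have := vtx_inj (by omega) (by omega) e1
            omega
          · show vtx γ' (s + r + 1) = _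
            rw [e2]
            congr 1
            omega
      have hne0 : vtx γ' s ≠ vtx γ b := by
        rw [hr0.1]
        intro hc
        have := vtx_inj (by omega) (by omega) hc
        omega
      exact ⟨fun h => absurd h hne0, fun _ => claim2⟩

end Recon

section Parity
variable {n ℓ : ℕ}

lemma filter_lt_succ_card (F : Finset ℕ) (x : ℕ) :
    (F.filter (· < x + 1)).card = (F.filter (· < x)).card + (if x ∈ F then 1 else 0) := by
  by_cases hx : x ∈ F
  · rw [if_pos hx]
    have h : F.filter (· < x + 1) = insert x (F.filter (· < x)) := by
      ext w
      simp only [Finset.mem_insert, Finset.mem_filter]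
      constructor
      · rintro ⟨h1, h2⟩
        rcases Nat.lt_or_ge w x with h | h
        · exact Or.inr ⟨h1, h⟩
        · exact Or.inl (by omega)
      · rintro (rfl | ⟨h1, h2⟩)
        · exact ⟨hx, by omega⟩
        · exact ⟨h1, by omega⟩
    rw [h, Finset.card_insert_of_notMem (by simp)]
  · rw [if_neg hx]
    have h : F.filter (· < x + 1) = F.filter (· < x) := by
      ext w
      simp only [Finset.mem_filter]
      constructor
      · rintro ⟨h1, h2⟩
        refine ⟨h1, ?_⟩
        have : w ≠ x := fun hc => hx (hc ▸ h1)
        omega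
      · rintro ⟨h1, h2⟩
        exact ⟨h1, by omega⟩
    rw [h]
    omega

variable {δ : Path n ℓ} {S : Finset (Sym2 (Fin n))}

lemma mem_stSet_iff {x : ℕ} :
    x ∈ stSet δ S ↔ x ∈ iSet δ S ∧ (x = 0 ∨ x - 1 ∉ iSet δ S) := by
  simp [stSet]

lemma mem_enSet_iff {x : ℕ} :
    x ∈ enSet δ S ↔ x ∈ iSet δ S ∧ x + 1 ∉ iSet δ S := by
  simp [enSet]

lemma cnt_lemma (δ : Path n ℓ) (S : Finset (Sym2 (Fin n))) (x : ℕ) :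
    ((stSet δ S).filter (· < x)).card =
      ((enSet δ S).filter (fun e => e + 1 < x)).card +
        (if 1 ≤ x ∧ x - 1 ∈ iSet δ S then 1 else 0) := by
  classical
  induction x with
  | zero => simp
  | succ x ih =>
    rw [filter_lt_succ_card]
    have hen : ((enSet δ S).filter (fun e => e + 1 < x + 1)).card =
        ((enSet δ S).filter (fun e => e + 1 < x)).card +
          (if 1 ≤ x ∧ x - 1 ∈ enSet δ S then 1 else 0) := by
      have himg : ∀ y : ℕ, (((enSet δ S).image (· + 1)).filter (· < y)) =
          ((enSet δ S).filter (fun e => e + 1 < y)).image (· + 1) := by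
        intro y
        rw [Finset.filter_image]
      have hc : ∀ y : ℕ, (((enSet δ S).image (· + 1)).filter (· < y)).card =
          ((enSet δ S).filter (fun e => e + 1 < y)).card := by
        intro y
        rw [himg y, Finset.card_image_of_injective _ (fun a b h => by omega)]
      have := filter_lt_succ_card ((enSet δ S).image (· + 1)) x
      rw [hc, hc] at this
      rw [this]
      congr 1
      have : (x ∈ (enSet δ S).image (· + 1)) ↔ (1 ≤ x ∧ x - 1 ∈ enSet δ S) := by
        simp only [Finset.mem_image]
        constructor
        · rintro ⟨e, he, rfl⟩
          exact ⟨by omega, by simpa using he⟩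
        · rintro ⟨h1, h2⟩
          exact ⟨x - 1, h2, by omega⟩
      simp only [this]
    rw [ih, hen]
    -- case analysis on the indicators
    by_cases hxi : x ∈ iSet δ S <;> by_cases hxp : 1 ≤ x ∧ x - 1 ∈ iSet δ S
    · have h1 : x ∉ stSet δ S := by
        rw [mem_stSet_iff]
        rintro ⟨-, h | h⟩ <;> [omega; exact h hxp.2]
      have h2 : ¬ (1 ≤ x ∧ x - 1 ∈ enSet δ S) := by
        rintro ⟨hx1, hx2⟩
        rw [mem_enSet_iff] at hx2
        have : x - 1 + 1 = x := by omega
        rw [this] at hx2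
        exact hx2.2 hxi
      simp only [if_pos hxp, if_neg h1, if_neg h2,
        if_pos (show 1 ≤ x + 1 ∧ x + 1 - 1 ∈ iSet δ S from ⟨by omega, by simpa using hxi⟩)]
    · have h1 : x ∈ stSet δ S := by
        rw [mem_stSet_iff]
        refine ⟨hxi, ?_⟩
        by_cases hx0 : x = 0
        · exact Or.inl hx0
        · right; intro hc; exact hxp ⟨by omega, hc⟩
      have h2 : ¬ (1 ≤ x ∧ x - 1 ∈ enSet δ S) := by
        rintro ⟨hx1, hx2⟩
        rw [mem_enSet_iff] at hx2
        exact hxp ⟨hx1, hx2.1⟩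
      simp only [if_pos h1, if_neg hxp, if_neg h2,
        if_pos (show 1 ≤ x + 1 ∧ x + 1 - 1 ∈ iSet δ S from ⟨by omega, by simpa using hxi⟩)]
    · have h1 : x ∉ stSet δ S := by
        rw [mem_stSet_iff]; rintro ⟨h, -⟩; exact hxi h
      have h2 : 1 ≤ x ∧ x - 1 ∈ enSet δ S := by
        refine ⟨hxp.1, ?_⟩
        rw [mem_enSet_iff]
        have : x - 1 + 1 = x := by omega
        rw [this]
        exact ⟨hxp.2, hxi⟩
      simp only [if_pos hxp, if_neg h1, if_pos h2,
        if_neg (show ¬ (1 ≤ x + 1 ∧ x + 1 - 1 ∈ iSet δ S) from by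
          rintro ⟨-, hc⟩; exact hxi (by simpa using hc))]
    · have h1 : x ∉ stSet δ S := by
        rw [mem_stSet_iff]; rintro ⟨h, -⟩; exact hxi h
      have h2 : ¬ (1 ≤ x ∧ x - 1 ∈ enSet δ S) := by
        rintro ⟨hx1, hx2⟩
        rw [mem_enSet_iff] at hx2
        exact hxp ⟨hx1, hx2.1⟩
      simp only [if_neg hxp, if_neg h1, if_neg h2,
        if_neg (show ¬ (1 ≤ x + 1 ∧ x + 1 - 1 ∈ iSet δ S) from by
          rintro ⟨-, hc⟩; exact hxi (by simpa using hc))]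

def kSet (δ : Path n ℓ) (S : Finset (Sym2 (Fin n))) : Finset ℕ :=
  stSet δ S ∪ (enSet δ S).image (· + 1)

lemma kSet_disj : Disjoint (stSet δ S) ((enSet δ S).image (· + 1)) := by
  simp only [Finset.disjoint_left, Finset.mem_image]
  rintro x hx ⟨e, he, rfl⟩
  rw [mem_stSet_iff] at hx
  rw [mem_enSet_iff] at he
  rcases hx.2 with h | h
  · omega
  · exact h (by simpa using he.1)

lemma card_kSet : (kSet δ S).card = (stSet δ S).card + (enSet δ S).card := by
  rw [kSet, Finset.card_union_of_disjoint kSet_disj,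
    Finset.card_image_of_injective _ (fun a b h => by omega)]

lemma rank_split (x : ℕ) : ((kSet δ S).filter (· < x)).card =
    ((stSet δ S).filter (· < x)).card + ((enSet δ S).filter (fun e => e + 1 < x)).card := by
  classical
  rw [kSet, Finset.filter_union,
    Finset.card_union_of_disjoint (Finset.disjoint_filter_filter kSet_disj),
    Finset.filter_image, Finset.card_image_of_injective _ (fun a b h => by omega)]

lemma st_recover : stSet δ S =
    (kSet δ S).filter (fun x => Even (((kSet δ S).filter (· < x)).card)) := by
  classical
  ext x
  simp only [Finset.mem_filter]
  constructor
  · intro hx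
    refine ⟨Finset.mem_union_left _ hx, ?_⟩
    rw [rank_split, cnt_lemma]
    have hind : ¬ (1 ≤ x ∧ x - 1 ∈ iSet δ S) := by
      rw [mem_stSet_iff] at hx
      rintro ⟨h1, h2⟩
      rcases hx.2 with h | h
      · omega
      · exact h h2
    rw [if_neg hind]
    simp [Nat.even_add]
  · rintro ⟨hk, hev⟩
    rw [kSet, Finset.mem_union] at hk
    rcases hk with h | h
    · exact h
    · exfalso
      simp only [Finset.mem_image] at h
      obtain ⟨e, he, rfl⟩ := h
      rw [rank_split, cnt_lemma] at hev
      have hind : 1 ≤ e + 1 ∧ e + 1 - 1 ∈ iSet δ S := by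
        rw [mem_enSet_iff] at he
        exact ⟨by omega, by simpa using he.1⟩
      rw [if_pos hind] at hev
      simp only [Nat.even_add_one, Nat.even_add] at hev
      tauto

lemma en_recover : (enSet δ S).image (· + 1) =
    (kSet δ S).filter (fun x => ¬ Even (((kSet δ S).filter (· < x)).card)) := by
  classical
  have h1 : kSet δ S = stSet δ S ∪ (enSet δ S).image (· + 1) := rfl
  ext x
  simp only [Finset.mem_filter]
  constructor
  · intro hx
    have hk : x ∈ kSet δ S := Finset.mem_union_right _ hx
    refine ⟨hk, fun hev => ?_⟩
    have : x ∈ stSet δ S := by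
      rw [st_recover]
      exact Finset.mem_filter.mpr ⟨hk, hev⟩
    exact Finset.disjoint_left.mp kSet_disj this hx
  · rintro ⟨hk, hnev⟩
    rw [h1, Finset.mem_union] at hk
    rcases hk with h | h
    · exfalso
      apply hnev
      rw [st_recover] at h
      exact (Finset.mem_filter.mp h).2
    · exact h

end Parity

section Positions
variable {n ℓ : ℕ}

noncomputable def runPos (γ' : Path n ℓ) (S : Finset (Sym2 (Fin n))) : Finset ℕ :=
  (stSet γ' S).biUnion (fun s => Finset.Icc s (endOf γ' S s + 1))

noncomputable def freePos (γ' : Path n ℓ) (S : Finset (Sym2 (Fin n))) : Finset ℕ :=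
  (Finset.range (ℓ + 1)) \ runPos γ' S

noncomputable def vSet (γ γ' : Path n ℓ) (S : Finset (Sym2 (Fin n))) : Finset (Fin n) :=
  (stSet γ' S).biUnion
    (fun s => (Finset.Icc (bOf γ γ' S s) (bOf γ γ' S s + mOf γ' S s)).image (vtx γ))

variable {γ γ' : Path n ℓ} {S : Finset (Sym2 (Fin n))}

lemma runPos_subset : runPos γ' S ⊆ Finset.range (ℓ + 1) := by
  intro x hx
  simp only [runPos, Finset.mem_biUnion, Finset.mem_Icc] at hx
  obtain ⟨s, hs, h1, h2⟩ := hx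
  have : endOf γ' S s < ℓ := iSet_lt (en_subset (endOf_spec (st_subset hs)).1)
  simp only [Finset.mem_range]
  omega

lemma card_runPos :
    (runPos γ' S).card = (iSet γ' S).card + (stSet γ' S).card := by
  classical
  rw [runPos, Finset.card_biUnion]
  · have : ∀ s ∈ stSet γ' S, (Finset.Icc s (endOf γ' S s + 1)).card =
        (endOf γ' S s + 1 - s) + 1 := by
      intro s hs
      have := (endOf_spec (st_subset hs)).2.1
      rw [Nat.card_Icc]
      omega
    rw [Finset.sum_congr rfl this, Finset.sum_add_distrib]
    rw [sum_len, Finset.sum_const, smul_eq_mul, mul_one]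
  · intro s₁ h1 s₂ h2 hne
    simp only [Finset.disjoint_left, Finset.mem_Icc]
    rintro x ⟨a1, a2⟩ ⟨b1, b2⟩
    rcases Nat.lt_or_ge s₁ s₂ with h | h
    · have := separation h1 h2 h; omega
    · have hlt : s₂ < s₁ := by
        rcases Nat.lt_or_ge s₂ s₁ with h' | h'
        · exact h'
        · exact absurd (le_antisymm h h').symm hne
      have := separation h2 h1 hlt; omega

lemma bm_le (hSγ : S ⊆ edgeFinset γ) {s : ℕ} (hs : s ∈ stSet γ' S) :
    bOf γ γ' S s + mOf γ' S s ≤ ℓ := by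
  have := bd_lt hSγ hs
  have := mOf_eq hs
  omega

lemma card_vSet (hSγ : S ⊆ edgeFinset γ) :
    (vSet γ γ' S).card = (iSet γ' S).card + (stSet γ' S).card := by
  classical
  rw [vSet, Finset.card_biUnion]
  · have h1 : ∀ s ∈ stSet γ' S,
        ((Finset.Icc (bOf γ γ' S s) (bOf γ γ' S s + mOf γ' S s)).image (vtx γ)).card =
          mOf γ' S s + 1 := by
      intro s hs
      rw [Finset.card_image_of_injOn (by
        intro a ha b hb h
        simp only [Finset.coe_Icc, Set.mem_Icc] at ha hb
        have := bm_le hSγ hs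
        exact vtx_inj (by omega) (by omega) h), Nat.card_Icc]
      omega
    rw [Finset.sum_congr rfl h1, Finset.sum_add_distrib]
    have h2 : ∀ s ∈ stSet γ' S, mOf γ' S s = endOf γ' S s + 1 - s := fun s _ => rfl
    rw [Finset.sum_congr rfl h2, sum_len, Finset.sum_const, smul_eq_mul, mul_one]
  · intro s₁ h1 s₂ h2 hne
    simp only [Finset.disjoint_left, Finset.mem_image, Finset.mem_Icc]
    rintro x ⟨a, ⟨a1, a2⟩, rfl⟩ ⟨c, ⟨c1, c2⟩, hc⟩
    have hm1 := bm_le hSγ h1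
    have hm2 := bm_le hSγ h2
    have hac : a = c := vtx_inj (by omega) (by omega) hc.symm
    have hmm1 := mOf_eq h1
    have hmm2 := mOf_eq h2
    rcases gamma_sep hSγ h1 h2 hne with h | h <;> omega

lemma free_not_in_vSet (hSγ : S ⊆ edgeFinset γ) {p : ℕ} (hp : p ∈ freePos γ' S) :
    vtx γ' p ∉ vSet γ γ' S := by
  classical
  simp only [freePos, Finset.mem_sdiff, Finset.mem_range] at hp
  obtain ⟨hpl, hpfree⟩ := hp
  intro hmem
  simp only [vSet, Finset.mem_biUnion, Finset.mem_image, Finset.mem_Icc] at hmem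
  obtain ⟨s, hs, q, ⟨hq1, hq2⟩, hq⟩ := hmem
  have hmm := mOf_eq hs
  have hbd := bd_lt hSγ hs
  have hbm := bm_le hSγ hs
  -- find a γ-edge-index x in the run interval such that vtx γ q ∈ edN γ x
  obtain ⟨x, hx1, hx2, hxe⟩ :
      ∃ x, bOf γ γ' S s ≤ x ∧ x ≤ bOf γ γ' S s + (endOf γ' S s - s) ∧ vtx γ q ∈ edN γ x := by
    rcases Nat.lt_or_ge q (bOf γ γ' S s + mOf γ' S s) with h | h
    · exact ⟨q, hq1, by omega, mem_edN.mpr (Or.inl rfl)⟩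
    · refine ⟨q - 1, by omega, by omega, mem_edN.mpr (Or.inr ?_)⟩
      congr 1
      omega
  -- x = ψ(k) for some k in the run
  have hxim : x ∈ (Finset.Icc s (endOf γ' S s)).image (psi γ γ') := by
    rw [psi_image hSγ hs]
    simp only [Finset.mem_Icc]
    exact ⟨hx1, hx2⟩
  obtain ⟨k, hk, rfl⟩ := Finset.mem_image.mp hxim
  simp only [Finset.mem_Icc] at hk
  have hki : k ∈ iSet γ' S := run_full (st_subset hs) hk.1 hk.2
  have hke : edN γ (psi γ γ' k) = edN γ' k := (psi_spec hSγ hki).2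
  rw [hke] at hxe
  have hel : endOf γ' S s < ℓ := iSet_lt (en_subset (endOf_spec (st_subset hs)).1)
  have hkl : k < ℓ := iSet_lt hki
  -- vtx γ' p equals vtx γ' k or vtx γ' (k+1)
  rw [hq] at hxe
  rcases mem_edN.mp hxe with h | h
  · have : p = k := vtx_inj (by omega) (by omega) h
    apply hpfree
    simp only [runPos, Finset.mem_biUnion, Finset.mem_Icc]
    exact ⟨s, hs, by omega, by omega⟩
  · have : p = k + 1 := vtx_inj (by omega) (by omega) h
    apply hpfree
    simp only [runPos, Finset.mem_biUnion, Finset.mem_Icc]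
    exact ⟨s, hs, by omega, by omega⟩

lemma endOf_congr {γ₂' : Path n ℓ} {S₂ : Finset (Sym2 (Fin n))}
    (h : enSet γ' S = enSet γ₂' S₂) : endOf γ' S = endOf γ₂' S₂ := by
  funext s
  rw [endOf, endOf, h]

end Positions

section EncodingHelpers
variable {n ℓ : ℕ}

lemma rank_lt_card {α : Type*} [LinearOrder α] [DecidableEq α] {X : Finset α} {v : α}
    (hv : v ∈ X) : (X.filter (· < v)).card < X.card := by
  apply Finset.card_lt_card
  constructor
  · exact Finset.filter_subset _ _
  · intro hsub
    have := hsub hv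
    simp at this

lemma rank_injOn {α : Type*} [LinearOrder α] [DecidableEq α] {X : Finset α} {v w : α}
    (hv : v ∈ X) (hw : w ∈ X)
    (h : (X.filter (· < v)).card = (X.filter (· < w)).card) : v = w := by
  by_contra hne
  have key : ∀ a b : α, a ∈ X → b ∈ X → a < b →
      (X.filter (· < a)).card < (X.filter (· < b)).card := by
    intro a b ha hb hab
    apply Finset.card_lt_card
    constructor
    · intro x hx
      simp only [Finset.mem_filter] at hx ⊢
      exact ⟨hx.1, lt_trans hx.2 hab⟩
    · intro hsub
      have := hsub (Finset.mem_filter.mpr ⟨ha, hab⟩)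
      simp only [Finset.mem_filter] at this
      exact absurd this.2 (lt_irrefl a)
  rcases lt_or_gt_of_ne hne with hlt | hlt
  · exact absurd h (Nat.ne_of_lt (key _ _ hv hw hlt))
  · exact absurd h.symm (Nat.ne_of_lt (key _ _ hw hv hlt))

lemma orderEmbOfFin_congr {α : Type*} [LinearOrder α] {s t : Finset α} (h : s = t) {k : ℕ}
    (h₁ : s.card = k) (h₂ : t.card = k) : s.orderEmbOfFin h₁ = t.orderEmbOfFin h₂ := by
  subst h
  rfl

variable {γ γ' : Path n ℓ} {S : Finset (Sym2 (Fin n))}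

lemma b_from_c (hSγ : S ⊆ edgeFinset γ) {s : ℕ} (hs : s ∈ stSet γ' S) :
    bOf γ γ' S s = cOf γ γ' S s +
      ∑ u ∈ (stSet γ' S).filter (fun u => cOf γ γ' S u < cOf γ γ' S s), mOf γ' S u := by
  classical
  have hfilter : (stSet γ' S).filter (fun u => cOf γ γ' S u < cOf γ γ' S s) =
      (stSet γ' S).filter (fun u => bOf γ γ' S u < bOf γ γ' S s) := by
    apply Finset.filter_congr
    intro u hu
    constructor
    · intro hc
      rcases Nat.lt_trichotomy (bOf γ γ' S u) (bOf γ γ' S s) with h | h | h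
      · exact h
      · rw [b_inj_st hSγ hu hs h] at hc
        omega
      · have := cOf_strict hSγ hs hu h
        omega
    · intro hb
      exact cOf_strict hSγ hu hs hb
  rw [hfilter]
  have := cOf_add hSγ hs
  rw [← sumBelow]
  omega

lemma vSet_congr {γ₂' : Path n ℓ} {S₂ : Finset (Sym2 (Fin n))}
    (hst : stSet γ' S = stSet γ₂' S₂)
    (hend : endOf γ' S = endOf γ₂' S₂)
    (hb : ∀ s ∈ stSet γ' S, bOf γ γ' S s = bOf γ γ₂' S₂ s) :
    vSet γ γ' S = vSet γ γ₂' S₂ := by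
  rw [vSet, vSet, ← hst]
  apply Finset.biUnion_congr rfl
  intro s hs
  rw [hb s hs, mOf, mOf, hend]

lemma runPos_congr {γ₂' : Path n ℓ} {S₂ : Finset (Sym2 (Fin n))}
    (hst : stSet γ' S = stSet γ₂' S₂)
    (hend : endOf γ' S = endOf γ₂' S₂) :
    runPos γ' S = runPos γ₂' S₂ := by
  rw [runPos, runPos, ← hst]
  apply Finset.biUnion_congr rfl
  intro s _
  rw [hend]

lemma card_freePos {i j : ℕ} (hi : (stSet γ' S).card = i) (hj : (iSet γ' S).card = j) :
    (freePos γ' S).card = ℓ + 1 - i - j := by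
  rw [freePos, Finset.card_sdiff_of_subset runPos_subset, card_runPos, hi, hj, Finset.card_range]
  omega

lemma card_runPos_le {i j : ℕ} (hi : (stSet γ' S).card = i) (hj : (iSet γ' S).card = j) :
    i + j ≤ ℓ + 1 := by
  have h := Finset.card_le_card (runPos_subset (γ' := γ') (S := S))
  rw [card_runPos, hi, hj, Finset.card_range] at h
  omega

end EncodingHelpers


section Encoding
variable {n ℓ : ℕ}

noncomputable def encK (γ γ' : Path n ℓ) : Finset ℕ :=
  kSet γ' (edgeFinset γ ∩ edgeFinset γ')

noncomputable def encSt (γ γ' : Path n ℓ) (i : ℕ) : Fin i → ℕ := fun t =>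
  if h : (stSet γ' (edgeFinset γ ∩ edgeFinset γ')).card = i then
    (stSet γ' (edgeFinset γ ∩ edgeFinset γ')).orderEmbOfFin h t else 0

noncomputable def encEps (γ γ' : Path n ℓ) (i : ℕ) : Fin i → Bool := fun t =>
  decide (vtx γ' (encSt γ γ' i t) =
    vtx γ (bOf γ γ' (edgeFinset γ ∩ edgeFinset γ') (encSt γ γ' i t)))

noncomputable def encC (γ γ' : Path n ℓ) (i j : ℕ) (hjl : j ≤ ℓ) :
    Fin i → Fin (ℓ + 1 - j) := fun t =>
  ⟨min (cOf γ γ' (edgeFinset γ ∩ edgeFinset γ') (encSt γ γ' i t)) (ℓ - j), by omega⟩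

noncomputable def encFree (γ γ' : Path n ℓ) (i j : ℕ) : Fin (ℓ + 1 - i - j) → ℕ := fun q =>
  if h : (freePos γ' (edgeFinset γ ∩ edgeFinset γ')).card = ℓ + 1 - i - j then
    (freePos γ' (edgeFinset γ ∩ edgeFinset γ')).orderEmbOfFin h q else 0

noncomputable def encRank (γ γ' : Path n ℓ) : Fin n → ℕ := fun v =>
  (((vSet γ γ' (edgeFinset γ ∩ edgeFinset γ'))ᶜ).filter (· < v)).card

noncomputable def encH (γ γ' : Path n ℓ) (i j : ℕ) (hn' : ℓ + 1 ≤ n) :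
    Fin (ℓ + 1 - i - j) → Fin (n - i - j) := fun q =>
  ⟨min (encRank γ γ' (vtx γ' (encFree γ γ' i j q))) (n - i - j - 1), by
    have := q.2
    omega⟩

variable {γ γ' : Path n ℓ} {i j : ℕ}

lemma encSt_eq (h : (stSet γ' (edgeFinset γ ∩ edgeFinset γ')).card = i) :
    encSt γ γ' i = fun t =>
      ((stSet γ' (edgeFinset γ ∩ edgeFinset γ')).orderEmbOfFin h t : ℕ) := by
  funext t
  rw [encSt, dif_pos h]

lemma encSt_mem (h : (stSet γ' (edgeFinset γ ∩ edgeFinset γ')).card = i) (t : Fin i) :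
    encSt γ γ' i t ∈ stSet γ' (edgeFinset γ ∩ edgeFinset γ') := by
  rw [encSt_eq h]
  exact Finset.orderEmbOfFin_mem _ h t

lemma encSt_inj (h : (stSet γ' (edgeFinset γ ∩ edgeFinset γ')).card = i) {t u : Fin i}
    (he : encSt γ γ' i t = encSt γ γ' i u) : t = u := by
  rw [encSt_eq h] at he
  exact (Finset.orderEmbOfFin _ h).injective (by exact_mod_cast he)

lemma encSt_surj (h : (stSet γ' (edgeFinset γ ∩ edgeFinset γ')).card = i) {s : ℕ}
    (hs : s ∈ stSet γ' (edgeFinset γ ∩ edgeFinset γ')) : ∃ t, encSt γ γ' i t = s := by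
  have := Finset.range_orderEmbOfFin (stSet γ' (edgeFinset γ ∩ edgeFinset γ')) h
  have hmem : s ∈ Set.range ⇑((stSet γ' (edgeFinset γ ∩ edgeFinset γ')).orderEmbOfFin h) := by
    rw [this]
    exact_mod_cast hs
  obtain ⟨t, ht⟩ := hmem
  exact ⟨t, by rw [encSt_eq h]; exact ht⟩

lemma encC_eq (h : (stSet γ' (edgeFinset γ ∩ edgeFinset γ')).card = i)
    (hic : (iSet γ' (edgeFinset γ ∩ edgeFinset γ')).card = j) (hjl : j ≤ ℓ) (t : Fin i) :
    (encC γ γ' i j hjl t : ℕ) = cOf γ γ' (edgeFinset γ ∩ edgeFinset γ') (encSt γ γ' i t) := by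
  have hle := cOf_le (γ := γ) (γ' := γ') Finset.inter_subset_left (encSt_mem h t)
  rw [hic] at hle
  rw [encC]
  simp only
  omega

lemma encFree_eq (h : (freePos γ' (edgeFinset γ ∩ edgeFinset γ')).card = ℓ + 1 - i - j) :
    encFree γ γ' i j = fun q =>
      ((freePos γ' (edgeFinset γ ∩ edgeFinset γ')).orderEmbOfFin h q : ℕ) := by
  funext q
  rw [encFree, dif_pos h]

lemma encFree_mem (h : (freePos γ' (edgeFinset γ ∩ edgeFinset γ')).card = ℓ + 1 - i - j)
    (q : Fin (ℓ + 1 - i - j)) :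
    encFree γ γ' i j q ∈ freePos γ' (edgeFinset γ ∩ edgeFinset γ') := by
  rw [encFree_eq h]
  exact Finset.orderEmbOfFin_mem _ h q

lemma encH_eq (hn' : ℓ + 1 ≤ n)
    (hfr : (freePos γ' (edgeFinset γ ∩ edgeFinset γ')).card = ℓ + 1 - i - j)
    (hst : (stSet γ' (edgeFinset γ ∩ edgeFinset γ')).card = i)
    (hic : (iSet γ' (edgeFinset γ ∩ edgeFinset γ')).card = j)
    (q : Fin (ℓ + 1 - i - j)) :
    (encH γ γ' i j hn' q : ℕ) = encRank γ γ' (vtx γ' (encFree γ γ' i j q)) := by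
  have hmem : vtx γ' (encFree γ γ' i j q) ∈ (vSet γ γ' (edgeFinset γ ∩ edgeFinset γ'))ᶜ := by
    rw [Finset.mem_compl]
    exact free_not_in_vSet Finset.inter_subset_left (encFree_mem hfr q)
  have hlt : encRank γ γ' (vtx γ' (encFree γ γ' i j q)) <
      ((vSet γ γ' (edgeFinset γ ∩ edgeFinset γ'))ᶜ).card := by
    exact rank_lt_card hmem
  have hcc : ((vSet γ γ' (edgeFinset γ ∩ edgeFinset γ'))ᶜ).card = n - i - j := by
    rw [Finset.card_compl, card_vSet Finset.inter_subset_left, hic, hst]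
    simp only [Fintype.card_fin]
    omega
  rw [hcc] at hlt
  rw [encH]
  simp only
  omega

lemma mem_Aset_iff {γ : Path n ℓ} {γ' : Path n ℓ} :
    γ' ∈ Aset γ i j ↔ theta γ γ' = i ∧ (edgeFinset γ ∩ edgeFinset γ').card = j := by
  classical
  rw [Aset]
  simp

end Encoding

section Injectivity
variable {n ℓ : ℕ}

lemma vtx_coe {δ : Path n ℓ} (p : Fin (ℓ + 1)) : vtx δ (p : ℕ) = δ.1 p := by
  have hp := p.isLt
  rw [vtx]
  apply congrArg
  apply Fin.ext
  show min (p : ℕ) ℓ = (p : ℕ)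
  omega

lemma encode_inj (γ : Path n ℓ) {γ₁ γ₂ : Path n ℓ} {i j : ℕ}
    (hjl : j ≤ ℓ) (hn' : ℓ + 1 ≤ n)
    (h1 : theta γ γ₁ = i ∧ (edgeFinset γ ∩ edgeFinset γ₁).card = j)
    (h2 : theta γ γ₂ = i ∧ (edgeFinset γ ∩ edgeFinset γ₂).card = j)
    (hK : encK γ γ₁ = encK γ γ₂)
    (hE : encEps γ γ₁ i = encEps γ γ₂ i)
    (hC : encC γ γ₁ i j hjl = encC γ γ₂ i j hjl)
    (hH : encH γ γ₁ i j hn' = encH γ γ₂ i j hn') : γ₁ = γ₂ := by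
  classical
  have hSγ₁ : (edgeFinset γ ∩ edgeFinset γ₁) ⊆ edgeFinset γ := Finset.inter_subset_left
  have hSγ₂ : (edgeFinset γ ∩ edgeFinset γ₂) ⊆ edgeFinset γ := Finset.inter_subset_left
  obtain ⟨hst₁, hen₁, hic₁⟩ := st_en_cards h1.1 h1.2
  obtain ⟨hst₂, hen₂, hic₂⟩ := st_en_cards h2.1 h2.2
  rw [encK, encK] at hK
  have hstEq : stSet γ₁ (edgeFinset γ ∩ edgeFinset γ₁) = stSet γ₂ (edgeFinset γ ∩ edgeFinset γ₂) := by
    rw [st_recover (δ := γ₁) (S := (edgeFinset γ ∩ edgeFinset γ₁)), st_recover (δ := γ₂) (S := (edgeFinset γ ∩ edgeFinset γ₂)), hK]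
  have henEq : enSet γ₁ (edgeFinset γ ∩ edgeFinset γ₁) = enSet γ₂ (edgeFinset γ ∩ edgeFinset γ₂) := by
    have himg : (enSet γ₁ (edgeFinset γ ∩ edgeFinset γ₁)).image (· + 1) = (enSet γ₂ (edgeFinset γ ∩ edgeFinset γ₂)).image (· + 1) := by
      rw [en_recover (δ := γ₁) (S := (edgeFinset γ ∩ edgeFinset γ₁)), en_recover (δ := γ₂) (S := (edgeFinset γ ∩ edgeFinset γ₂)), hK]
    exact Finset.image_injective (f := (· + 1)) (fun a b hab => by
      simp only at hab; omega) himg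
  have hendEq : endOf γ₁ (edgeFinset γ ∩ edgeFinset γ₁) = endOf γ₂ (edgeFinset γ ∩ edgeFinset γ₂) := endOf_congr henEq
  have hmOfEq : mOf γ₁ (edgeFinset γ ∩ edgeFinset γ₁) = mOf γ₂ (edgeFinset γ ∩ edgeFinset γ₂) := by funext s; rw [mOf, mOf, hendEq]
  have hstE : encSt γ γ₁ i = encSt γ γ₂ i := by
    rw [encSt_eq hst₁, encSt_eq hst₂, orderEmbOfFin_congr hstEq hst₁ hst₂]
  have hcOf : ∀ s ∈ stSet γ₁ (edgeFinset γ ∩ edgeFinset γ₁), cOf γ γ₁ (edgeFinset γ ∩ edgeFinset γ₁) s = cOf γ γ₂ (edgeFinset γ ∩ edgeFinset γ₂) s := by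
    intro s hs
    obtain ⟨t, ht⟩ := encSt_surj hst₁ hs
    have e1 := encC_eq (γ := γ) (γ' := γ₁) hst₁ hic₁ hjl t
    have e2 := encC_eq (γ := γ) (γ' := γ₂) hst₂ hic₂ hjl t
    rw [hC] at e1
    rw [← hstE, ht] at e2
    rw [ht] at e1
    omega
  have hbOf : ∀ s ∈ stSet γ₁ (edgeFinset γ ∩ edgeFinset γ₁), bOf γ γ₁ (edgeFinset γ ∩ edgeFinset γ₁) s = bOf γ γ₂ (edgeFinset γ ∩ edgeFinset γ₂) s := by
    intro s hs
    have hs₂ : s ∈ stSet γ₂ (edgeFinset γ ∩ edgeFinset γ₂) := by rw [← hstEq]; exact hs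
    have hsum : (stSet γ₁ (edgeFinset γ ∩ edgeFinset γ₁)).filter (fun u => cOf γ γ₁ (edgeFinset γ ∩ edgeFinset γ₁) u < cOf γ γ₁ (edgeFinset γ ∩ edgeFinset γ₁) s) =
        (stSet γ₂ (edgeFinset γ ∩ edgeFinset γ₂)).filter (fun u => cOf γ γ₂ (edgeFinset γ ∩ edgeFinset γ₂) u < cOf γ γ₂ (edgeFinset γ ∩ edgeFinset γ₂) s) := by
      rw [← hstEq]
      apply Finset.filter_congr
      intro u hu
      rw [hcOf u hu, hcOf s hs]
    have hsum2 : ∑ u ∈ (stSet γ₂ (edgeFinset γ ∩ edgeFinset γ₂)).filter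
        (fun u => cOf γ γ₂ (edgeFinset γ ∩ edgeFinset γ₂) u <
          cOf γ γ₂ (edgeFinset γ ∩ edgeFinset γ₂) s), mOf γ₁ (edgeFinset γ ∩ edgeFinset γ₁) u =
        ∑ u ∈ (stSet γ₂ (edgeFinset γ ∩ edgeFinset γ₂)).filter
        (fun u => cOf γ γ₂ (edgeFinset γ ∩ edgeFinset γ₂) u <
          cOf γ γ₂ (edgeFinset γ ∩ edgeFinset γ₂) s), mOf γ₂ (edgeFinset γ ∩ edgeFinset γ₂) u := by
      apply Finset.sum_congr rfl
      intro u _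
      rw [hmOfEq]
    have hcs := hcOf s hs
    rw [b_from_c hSγ₁ hs, b_from_c hSγ₂ hs₂, hsum, hsum2, hcs]
  have hvEq : vSet γ γ₁ (edgeFinset γ ∩ edgeFinset γ₁) = vSet γ γ₂ (edgeFinset γ ∩ edgeFinset γ₂) := vSet_congr hstEq hendEq hbOf
  have hrunEq : runPos γ₁ (edgeFinset γ ∩ edgeFinset γ₁) = runPos γ₂ (edgeFinset γ ∩ edgeFinset γ₂) := runPos_congr hstEq hendEq
  have hfr₁ : (freePos γ₁ (edgeFinset γ ∩ edgeFinset γ₁)).card = ℓ + 1 - i - j := card_freePos hst₁ hic₁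
  have hfr₂ : (freePos γ₂ (edgeFinset γ ∩ edgeFinset γ₂)).card = ℓ + 1 - i - j := card_freePos hst₂ hic₂
  have hfreeEq : freePos γ₁ (edgeFinset γ ∩ edgeFinset γ₁) = freePos γ₂ (edgeFinset γ ∩ edgeFinset γ₂) := by rw [freePos, freePos, hrunEq]
  have hfreeE : encFree γ γ₁ i j = encFree γ γ₂ i j := by
    rw [encFree_eq hfr₁, encFree_eq hfr₂, orderEmbOfFin_congr hfreeEq hfr₁ hfr₂]
  have hrankEq : encRank γ γ₁ = encRank γ γ₂ := by
    funext v
    rw [encRank, encRank, hvEq]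
  have hvtx : ∀ p, p ≤ ℓ → vtx γ₁ p = vtx γ₂ p := by
    intro p hp
    by_cases hrun : p ∈ runPos γ₁ (edgeFinset γ ∩ edgeFinset γ₁)
    · simp only [runPos, Finset.mem_biUnion, Finset.mem_Icc] at hrun
      obtain ⟨s, hs, hp1, hp2⟩ := hrun
      obtain ⟨t, ht⟩ := encSt_surj hst₁ hs
      have hm1 := mOf_eq (γ' := γ₁) (S := (edgeFinset γ ∩ edgeFinset γ₁)) hs
      have hrm : p - s ≤ mOf γ₁ (edgeFinset γ ∩ edgeFinset γ₁) s := by omega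
      have hrm₂ : p - s ≤ mOf γ₂ (edgeFinset γ ∩ edgeFinset γ₂) s := by rw [← hmOfEq]; exact hrm
      have hs₂ : s ∈ stSet γ₂ (edgeFinset γ ∩ edgeFinset γ₂) := by rw [← hstEq]; exact hs
      have hepsEq : (vtx γ₁ s = vtx γ (bOf γ γ₁ (edgeFinset γ ∩ edgeFinset γ₁) s)) ↔
          (vtx γ₂ s = vtx γ (bOf γ γ₂ (edgeFinset γ ∩ edgeFinset γ₂) s)) := by
        have hcong := congrFun hE t
        simp only [encEps] at hcong
        rw [← hstE, ht] at hcong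
        exact decide_eq_decide.mp hcong
      have hb := hbOf s hs
      have hps : p = s + (p - s) := by omega
      rw [hps]
      by_cases heps : vtx γ₁ s = vtx γ (bOf γ γ₁ (edgeFinset γ ∩ edgeFinset γ₁) s)
      · have e1 := (recon hSγ₁ hs).1 heps (p - s) hrm
        have e2 := (recon hSγ₂ hs₂).1 (hepsEq.mp heps) (p - s) hrm₂
        rw [e1, e2, hb]
      · have e1 := (recon hSγ₁ hs).2 heps (p - s) hrm
        have e2 := (recon hSγ₂ hs₂).2 (fun hc => heps (hepsEq.mpr hc)) (p - s) hrm₂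
        rw [e1, e2, hb, hmOfEq]
    · have hfree : p ∈ freePos γ₁ (edgeFinset γ ∩ edgeFinset γ₁) := by
        rw [freePos, Finset.mem_sdiff, Finset.mem_range]
        exact ⟨by omega, hrun⟩
      have hrange := Finset.range_orderEmbOfFin (freePos γ₁ (edgeFinset γ ∩ edgeFinset γ₁)) hfr₁
      have hpr : p ∈ Set.range ⇑((freePos γ₁ (edgeFinset γ ∩ edgeFinset γ₁)).orderEmbOfFin hfr₁) := by
        rw [hrange]; exact_mod_cast hfree
      obtain ⟨q, hq⟩ := hpr
      have hq1 : encFree γ γ₁ i j q = p := by rw [encFree_eq hfr₁]; exact_mod_cast hq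
      have e1 := encH_eq (γ := γ) (γ' := γ₁) hn' hfr₁ hst₁ hic₁ q
      have e2 := encH_eq (γ := γ) (γ' := γ₂) hn' hfr₂ hst₂ hic₂ q
      rw [hH] at e1
      rw [← hfreeE, hq1] at e2
      rw [hq1] at e1
      have he : encRank γ γ₁ (vtx γ₁ p) = encRank γ γ₂ (vtx γ₂ p) := by omega
      rw [hrankEq] at he
      have hm1 : vtx γ₁ p ∈ (vSet γ γ₂ (edgeFinset γ ∩ edgeFinset γ₂))ᶜ := by
        rw [← hvEq, Finset.mem_compl]
        exact free_not_in_vSet hSγ₁ hfree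
      have hm2 : vtx γ₂ p ∈ (vSet γ γ₂ (edgeFinset γ ∩ edgeFinset γ₂))ᶜ := by
        rw [Finset.mem_compl]
        exact free_not_in_vSet hSγ₂ (by rw [← hfreeEq]; exact hfree)
      simp only [encRank] at he
      exact rank_injOn hm1 hm2 he
  apply Subtype.ext
  funext pf
  have hpp := hvtx (pf : ℕ) (by omega)
  rwa [vtx_coe, vtx_coe] at hpp

end Injectivity


/-- Lemma 2.9 (counting): for γ of length 1 ≤ ℓ ≤ n - 1 and 0 ≤ i ≤ j ≤ ℓ,
|A_{i,j}(γ)| ≤ C(ℓ+1, 2i) · C(n-i-j, ℓ+1-i-j) · 2^i · (ℓ+1-j)!. -/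
theorem counting (n ℓ : ℕ) (hn : 2 ≤ n) (hℓ1 : 1 ≤ ℓ) (hℓ : ℓ ≤ n - 1)
    (γ : Path n ℓ) (i j : ℕ) (hij : i ≤ j) (hjℓ : j ≤ ℓ) :
    (Aset γ i j).card ≤
      Nat.choose (ℓ + 1) (2 * i) * Nat.choose (n - i - j) (ℓ + 1 - i - j) *
        2 ^ i * Nat.factorial (ℓ + 1 - j) := by
  classical
  rcases Finset.eq_empty_or_nonempty (Aset γ i j) with hA | hA
  · simp [hA]
  obtain ⟨w, hw⟩ := hA
  obtain ⟨hwθ, hwj⟩ := mem_Aset_iff.mp hw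
  obtain ⟨hwst, hwen, hwic⟩ := st_en_cards hwθ hwj
  have hijl : i + j ≤ ℓ + 1 := card_runPos_le hwst hwic
  have hn' : ℓ + 1 ≤ n := by omega
  set B := ((Finset.range (ℓ + 1)).powersetCard (2 * i)) ×ˢ
    ((Finset.univ : Finset (Fin i → Bool)) ×ˢ
      (((Finset.univ : Finset (Fin i → Fin (ℓ + 1 - j))).filter Function.Injective) ×ˢ
        ((Finset.univ : Finset (Fin (ℓ + 1 - i - j) → Fin (n - i - j))).filter
          Function.Injective))) with hB
  have hcard : (Aset γ i j).card ≤ B.card := by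
    apply Finset.card_le_card_of_injOn
      (fun γ' => (encK γ γ', (encEps γ γ' i, (encC γ γ' i j hjℓ, encH γ γ' i j hn'))))
    · -- maps into B
      intro γ' hγ'
      obtain ⟨hθ, hj⟩ := mem_Aset_iff.mp hγ'
      obtain ⟨hst, hen, hic⟩ := st_en_cards hθ hj
      have hSγ : (edgeFinset γ ∩ edgeFinset γ') ⊆ edgeFinset γ := Finset.inter_subset_left
      rw [hB]
      simp only [Finset.mem_coe, Finset.mem_product, Finset.mem_filter, Finset.mem_univ, true_and]
      refine ⟨?_, ?_, ?_⟩
      · -- K component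
        rw [Finset.mem_powersetCard]
        constructor
        · intro x hx
          rw [encK, kSet, Finset.mem_union] at hx
          rcases hx with h | h
          · have := iSet_lt (st_subset h)
            rw [Finset.mem_range]
            omega
          · obtain ⟨e, he, rfl⟩ := Finset.mem_image.mp h
            have := iSet_lt (en_subset he)
            rw [Finset.mem_range]
            omega
        · rw [encK, card_kSet, hst, hen]
          omega
      · -- C component injective
        intro t u htu
        have e1 := encC_eq (γ := γ) (γ' := γ') hst hic hjℓ t
        have e2 := encC_eq (γ := γ) (γ' := γ') hst hic hjℓ u
        have hval : cOf γ γ' (edgeFinset γ ∩ edgeFinset γ') (encSt γ γ' i t) =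
            cOf γ γ' (edgeFinset γ ∩ edgeFinset γ') (encSt γ γ' i u) := by
          have := congrArg Fin.val htu
          omega
        apply encSt_inj hst
        have hmt := encSt_mem hst t
        have hmu := encSt_mem hst u
        rcases Nat.lt_trichotomy
          (bOf γ γ' (edgeFinset γ ∩ edgeFinset γ') (encSt γ γ' i t))
          (bOf γ γ' (edgeFinset γ ∩ edgeFinset γ') (encSt γ γ' i u)) with h | h | h
        · have := cOf_strict hSγ hmt hmu h
          omega
        · exact b_inj_st hSγ hmt hmu h
        · have := cOf_strict hSγ hmu hmt h
          omega
      · -- H component injective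
        intro q q' hqq
        have hfr : (freePos γ' (edgeFinset γ ∩ edgeFinset γ')).card = ℓ + 1 - i - j :=
          card_freePos hst hic
        have e1 := encH_eq (γ := γ) (γ' := γ') hn' hfr hst hic q
        have e2 := encH_eq (γ := γ) (γ' := γ') hn' hfr hst hic q'
        have hrk : encRank γ γ' (vtx γ' (encFree γ γ' i j q)) =
            encRank γ γ' (vtx γ' (encFree γ γ' i j q')) := by
          have := congrArg Fin.val hqq
          omega
        have hfm := encFree_mem hfr q
        have hfm' := encFree_mem hfr q'
        have hv1 : vtx γ' (encFree γ γ' i j q) ∈ (vSet γ γ' (edgeFinset γ ∩ edgeFinset γ'))ᶜ :=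
          Finset.mem_compl.mpr (free_not_in_vSet hSγ hfm)
        have hv2 : vtx γ' (encFree γ γ' i j q') ∈ (vSet γ γ' (edgeFinset γ ∩ edgeFinset γ'))ᶜ :=
          Finset.mem_compl.mpr (free_not_in_vSet hSγ hfm')
        simp only [encRank] at hrk
        have hveq := rank_injOn hv1 hv2 hrk
        have hle1 : encFree γ γ' i j q ≤ ℓ := by
          have := runPos_subset (γ' := γ') (S := edgeFinset γ ∩ edgeFinset γ')
          have h2 : encFree γ γ' i j q ∈ Finset.range (ℓ + 1) := by
            have := hfm
            rw [freePos, Finset.mem_sdiff] at this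
            exact this.1
          rw [Finset.mem_range] at h2
          omega
        have hle2 : encFree γ γ' i j q' ≤ ℓ := by
          have h2 : encFree γ γ' i j q' ∈ Finset.range (ℓ + 1) := by
            have := hfm'
            rw [freePos, Finset.mem_sdiff] at this
            exact this.1
          rw [Finset.mem_range] at h2
          omega
        have hfeq : encFree γ γ' i j q = encFree γ γ' i j q' := vtx_inj hle1 hle2 hveq
        rw [encFree_eq hfr] at hfeq
        exact (Finset.orderEmbOfFin _ hfr).injective (by exact_mod_cast hfeq)
    · -- injectivity on Aset
      intro a ha b hb hab
      simp only [Prod.mk.injEq] at hab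
      exact encode_inj γ hjℓ hn' (mem_Aset_iff.mp ha) (mem_Aset_iff.mp hb)
        hab.1 hab.2.1 hab.2.2.1 hab.2.2.2
  -- compute the cardinality of B
  have hinjcard : ∀ (a b : ℕ),
      ((Finset.univ : Finset (Fin a → Fin b)).filter Function.Injective).card =
        Nat.descFactorial b a := by
    intro a b
    rw [← Fintype.card_subtype,
      Fintype.card_congr (Equiv.subtypeInjectiveEquivEmbedding (Fin a) (Fin b)),
      Fintype.card_embedding_eq]
    simp
  have hBcard : B.card = Nat.choose (ℓ + 1) (2 * i) *
      (2 ^ i * (Nat.descFactorial (ℓ + 1 - j) i *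
        Nat.descFactorial (n - i - j) (ℓ + 1 - i - j))) := by
    rw [hB, Finset.card_product, Finset.card_product, Finset.card_product,
      Finset.card_powersetCard, Finset.card_range, hinjcard, hinjcard,
      Finset.card_univ]
    simp
  have e1 : Nat.descFactorial (ℓ + 1 - j) i = Nat.choose (ℓ + 1 - j) i * Nat.factorial i := by
    rw [Nat.descFactorial_eq_factorial_mul_choose]; ring
  have e2 : Nat.descFactorial (n - i - j) (ℓ + 1 - i - j) =
      Nat.choose (n - i - j) (ℓ + 1 - i - j) * Nat.factorial (ℓ + 1 - i - j) := by
    rw [Nat.descFactorial_eq_factorial_mul_choose]; ring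
  have e3 : Nat.choose (ℓ + 1 - j) i * Nat.factorial i * Nat.factorial (ℓ + 1 - i - j) =
      Nat.factorial (ℓ + 1 - j) := by
    have h' : ℓ + 1 - j - i = ℓ + 1 - i - j := by omega
    rw [← h']
    exact Nat.choose_mul_factorial_mul_factorial (by omega)
  calc (Aset γ i j).card ≤ B.card := hcard
    _ = Nat.choose (ℓ + 1) (2 * i) * Nat.choose (n - i - j) (ℓ + 1 - i - j) *
        2 ^ i * Nat.factorial (ℓ + 1 - j) := by
      rw [hBcard, e1, e2, ← e3]
      ring

end Paper
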